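/- arXiv:2301.02022 — 4 statements merged into one kernel-verified Lean document; each statement's English description precedes it below -/
import Mathlib

section
/- There exists a sequence (r_k)_{k≥2} of polynomials in two variables with rational coefficients such that: each r_k is symmetric in its two variables and homogeneous of degree k − 2; r_2 = 1/8 (constant), r_3(x, y) = (x + y)/8, and r_4(x, y) = (13(x² + y²) + 22xy)/128; and for every h > 0 and all real x, y with |x| < 1/h and |y| < 1/h, the series Σ_{k=2}^∞ r_k(x, y) h^k converges absolutely and Φ(x, y; h) = 1 − (x − y)² · Σ_{k=2}^∞ r_k(x, y) h^k. -/
open MvPolynomial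

/-- `Φ(x, y; h) = √((1 − hx)(1 − hy)) / (1 − h(x + y)/2)`. -/
noncomputable def Phi (x y h : ℝ) : ℝ :=
  Real.sqrt ((1 - h * x) * (1 - h * y)) / (1 - h * (x + y) / 2)

open Finset

namespace Stmt2Aux

/-- `cc n = catalan n / 2^(2n+1)`, the coefficient of `u^(n+1)` in `1 - √(1-u)`. -/
noncomputable def cc (n : ℕ) : ℝ := (catalan n : ℝ) / 2 ^ (2 * n + 1)

lemma cc_nonneg (n : ℕ) : 0 ≤ cc n := by unfold cc; positivity

lemma catalan_le_four_pow (n : ℕ) : catalan n ≤ 4 ^ n := by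
  induction n with
  | zero => simp
  | succ n ih =>
    have h1 : (n + 1 + 1) * catalan (n + 1) = Nat.centralBinom (n + 1) :=
      succ_mul_catalan_eq_centralBinom (n + 1)
    have h2 : (n + 1) * Nat.centralBinom (n + 1) = 2 * (2 * n + 1) * Nat.centralBinom n :=
      Nat.succ_mul_centralBinom_succ n
    have h3 : (n + 1) * catalan n = Nat.centralBinom n := succ_mul_catalan_eq_centralBinom n
    have key : catalan (n + 1) ≤ 4 * catalan n := by
      have : (n + 1) * ((n + 2) * catalan (n + 1)) ≤ (n + 1) * ((n + 2) * (4 * catalan n)) := by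
        calc (n + 1) * ((n + 2) * catalan (n + 1)) = (n + 1) * Nat.centralBinom (n + 1) := by
              rw [show n + 2 = n + 1 + 1 from rfl, h1]
          _ = 2 * (2 * n + 1) * ((n + 1) * catalan n) := by rw [h2, h3]
          _ ≤ (4 * (n + 2)) * ((n + 1) * catalan n) := by
              apply Nat.mul_le_mul_right; omega
          _ = (n + 1) * ((n + 2) * (4 * catalan n)) := by ring
      have := Nat.le_of_mul_le_mul_left this (by omega : 0 < n + 1)
      exact Nat.le_of_mul_le_mul_left this (by omega : 0 < n + 2)
    calc catalan (n + 1) ≤ 4 * catalan n := key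
      _ ≤ 4 * 4 ^ n := by exact Nat.mul_le_mul_left 4 ih
      _ = 4 ^ (n + 1) := by ring

lemma cc_le_half (n : ℕ) : cc n ≤ 1 / 2 := by
  have h : (catalan n : ℝ) ≤ 4 ^ n := by exact_mod_cast catalan_le_four_pow n
  rw [cc, div_le_iff₀ (by positivity)]
  calc (catalan n : ℝ) ≤ 4 ^ n := h
    _ = 1 / 2 * 2 ^ (2 * n + 1) := by rw [pow_succ, pow_mul]; norm_num; ring

lemma sum_cc (N : ℕ) :
    ∑ n ∈ range (N + 1), cc n = 1 - (Nat.centralBinom (N + 1) : ℝ) / 4 ^ (N + 1) := by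
  induction N with
  | zero =>
    simp [cc, Nat.centralBinom]
    norm_num [Nat.choose]
  | succ N ih =>
    rw [Finset.sum_range_succ, ih]
    have h1 : ((N + 1 + 1) * catalan (N + 1) : ℝ) = Nat.centralBinom (N + 1) := by
      exact_mod_cast congrArg (Nat.cast : ℕ → ℝ) (succ_mul_catalan_eq_centralBinom (N + 1))
    have h2 : ((N + 1 + 1) * Nat.centralBinom (N + 1 + 1) : ℝ)
        = 2 * (2 * (N + 1) + 1) * Nat.centralBinom (N + 1) := by
      exact_mod_cast congrArg (Nat.cast : ℕ → ℝ) (Nat.succ_mul_centralBinom_succ (N + 1))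
    have hN2 : ((N : ℝ) + 1 + 1) ≠ 0 := by positivity
    have h4 : (4 : ℝ) ^ (N + 1 + 1) = 4 * 4 ^ (N + 1) := by rw [pow_succ]; ring
    have h2' : (2 : ℝ) ^ (2 * (N + 1) + 1) = 2 * 4 ^ (N + 1) := by
      rw [pow_succ, pow_mul]; norm_num; ring
    push_cast at h1 h2
    rw [cc, h4, h2']
    have hP : (4 : ℝ) ^ (N + 1) ≠ 0 := by positivity
    have key : 2 * ((N:ℝ)+2) * (catalan (N+1) : ℝ) + ((N:ℝ)+2) * ((N+1+1).centralBinom : ℝ)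
        = 4 * ((N:ℝ)+2) * ((N+1).centralBinom : ℝ) := by linear_combination 2*h1 + h2
    have key2 : 2 * (catalan (N+1) : ℝ) + ((N+1+1).centralBinom : ℝ)
        = 4 * ((N+1).centralBinom : ℝ) := by
      have hN2' : ((N:ℝ)+2) ≠ 0 := by positivity
      apply mul_left_cancel₀ hN2'
      linear_combination key
    linear_combination key2 / (4 * (4:ℝ) ^ (N + 1))

lemma sum_cc_le (N : ℕ) : ∑ n ∈ range N, cc n ≤ 1 := by
  cases N with
  | zero => simp
  | succ N =>
    rw [sum_cc]
    have : 0 ≤ (Nat.centralBinom (N + 1) : ℝ) / 4 ^ (N + 1) := by positivity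
    linarith

lemma summable_cc : Summable cc := summable_of_sum_range_le cc_nonneg sum_cc_le

lemma tsum_cc_le : ∑' n, cc n ≤ 1 := Real.tsum_le_of_sum_range_le cc_nonneg sum_cc_le

lemma summable_cc_mul_pow {u : ℝ} (h0 : 0 ≤ u) (h1 : u < 1) :
    Summable (fun n => cc n * u ^ n) := by
  apply Summable.of_nonneg_of_le
    (fun n => mul_nonneg (cc_nonneg n) (pow_nonneg h0 n))
    (fun n => mul_le_mul_of_nonneg_right (cc_le_half n) (pow_nonneg h0 n))
    ((summable_geometric_of_lt_one h0 h1).mul_left (1/2))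

/-- The shifted sequence: `aa 0 = 0`, `aa (n+1) = cc n`. -/
noncomputable def aa : ℕ → ℝ
  | 0 => 0
  | n + 1 => cc n

lemma aa_zero : aa 0 = 0 := rfl
lemma aa_succ (n : ℕ) : aa (n + 1) = cc n := rfl

lemma antidiag_aa (n : ℕ) :
    ∑ kl ∈ Finset.HasAntidiagonal.antidiagonal n, aa kl.1 * aa kl.2
      = 2 * aa n - (if n = 1 then 1 else 0) := by
  match n with
  | 0 => simp [aa_zero]
  | 1 =>
    rw [Finset.Nat.sum_antidiagonal_eq_sum_range_succ_mk]
    rw [Finset.sum_range_succ, Finset.sum_range_succ, Finset.sum_range_zero]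
    norm_num [aa_zero, aa_succ, cc]
  | (m + 2) =>
    rw [Finset.Nat.sum_antidiagonal_eq_sum_range_succ_mk, Finset.sum_range_succ',
      Finset.sum_range_succ]
    have hlast : m + 2 - (m + 1 + 1) = 0 := by omega
    rw [hlast, aa_zero, mul_zero, add_zero, zero_mul, add_zero]
    rw [if_neg (by omega)]
    have e1 : ∀ k ∈ range (m + 1), aa (k + 1) * aa (m + 2 - (k + 1))
        = (catalan k : ℝ) * (catalan (m - k) : ℝ) / 2 ^ (2 * m + 2) := by
      intro k hk
      rw [mem_range] at hk
      rw [show m + 2 - (k + 1) = (m - k) + 1 by omega, aa_succ, aa_succ, cc, cc,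
        div_mul_div_comm, ← pow_add]
      congr 2
      omega
    rw [Finset.sum_congr rfl e1, ← Finset.sum_div]
    have e2 : (catalan (m + 1) : ℝ)
        = ∑ k ∈ range (m + 1), (catalan k : ℝ) * (catalan (m - k)) := by
      rw [catalan_succ' m, Finset.Nat.sum_antidiagonal_eq_sum_range_succ_mk]
      push_cast
      rfl
    rw [← e2, show m + 2 = (m + 1) + 1 from rfl, aa_succ, cc,
      show 2 * (m + 1) + 1 = (2 * m + 2) + 1 by omega, pow_add]
    ring

theorem sqrt_series {u : ℝ} (h0 : 0 ≤ u) (h1 : u < 1) :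
    u * ∑' n, cc n * u ^ n = 1 - Real.sqrt (1 - u) := by
  have hg : Summable (fun n => cc n * u ^ n) := summable_cc_mul_pow h0 h1
  set g := ∑' n, cc n * u ^ n with hgdef
  have base : HasSum (fun n => aa (n + 1) * u ^ (n + 1)) (u * g) := by
    have h := hg.hasSum.mul_left u
    have e : (fun n => u * (cc n * u ^ n)) = fun n => aa (n + 1) * u ^ (n + 1) := by
      funext n; rw [aa_succ]; ring
    rwa [e] at h
  have h1' : HasSum (fun n => aa n * u ^ n) (u * g) := by
    refine (hasSum_nat_add_iff' 1).mp ?_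
    simpa [aa_zero] using base
  have habs : Summable fun n => ‖aa n * u ^ n‖ := by
    simpa [Real.norm_eq_abs, abs_mul, abs_pow] using h1'.summable.abs
  have cauchy := tsum_mul_tsum_eq_tsum_sum_antidiagonal_of_summable_norm habs habs
  rw [h1'.tsum_eq] at cauchy
  have inner : ∀ n : ℕ, (∑ kl ∈ Finset.HasAntidiagonal.antidiagonal n,
      (aa kl.1 * u ^ kl.1) * (aa kl.2 * u ^ kl.2))
      = 2 * (aa n * u ^ n) - (if n = 1 then u else 0) := by
    intro n
    have e : ∀ kl ∈ Finset.HasAntidiagonal.antidiagonal n,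
        (aa kl.1 * u ^ kl.1) * (aa kl.2 * u ^ kl.2) = (aa kl.1 * aa kl.2) * u ^ n := by
      intro kl hkl
      rw [Finset.HasAntidiagonal.mem_antidiagonal] at hkl
      rw [← hkl, pow_add]; ring
    rw [Finset.sum_congr rfl e, ← Finset.sum_mul, antidiag_aa, sub_mul]
    congr 1
    · ring
    · split_ifs with h
      · rw [h]; ring
      · ring
  have hEq : (u * g) * (u * g) = 2 * (u * g) - u := by
    rw [cauchy, tsum_congr inner]
    have hA : HasSum (fun n => 2 * (aa n * u ^ n)) (2 * (u * g)) := h1'.mul_left 2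
    have hB : HasSum (fun n : ℕ => if n = 1 then u else 0) u := hasSum_ite_eq 1 u
    exact (hA.sub hB).tsum_eq
  set f := u * g with hfdef
  have hfle : f ≤ u := by
    have e : f = ∑' n, cc n * u ^ (n + 1) := by
      rw [hfdef, ← tsum_mul_left]
      exact tsum_congr fun n => by ring
    have s1 : Summable (fun n => cc n * u ^ (n + 1)) :=
      (hg.mul_left u).congr fun n => by ring
    have s2 : Summable (fun n => cc n * u) := summable_cc.mul_right u
    calc f = ∑' n, cc n * u ^ (n + 1) := e
      _ ≤ ∑' n, cc n * u := by
          refine Summable.tsum_le_tsum (fun n => ?_) s1 s2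
          have hp : u ^ (n + 1) ≤ u := by
            simpa using pow_le_pow_of_le_one h0 h1.le (show 1 ≤ n + 1 by omega)
          exact mul_le_mul_of_nonneg_left hp (cc_nonneg n)
      _ = (∑' n, cc n) * u := tsum_mul_right
      _ ≤ 1 * u := mul_le_mul_of_nonneg_right tsum_cc_le h0
      _ = u := one_mul u
  have hsq : (1 - f) ^ 2 = 1 - u := by linear_combination hEq
  have h1f : 0 ≤ 1 - f := by linarith
  have : Real.sqrt (1 - u) = 1 - f := by rw [← hsq, Real.sqrt_sq h1f]
  rw [this]; ring

def Aq (n m : ℕ) : ℚ :=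
  (catalan n : ℚ) * ((m + (2 * n + 1)).choose (2 * n + 1) : ℚ) / 2 ^ (4 * n + 3 + m)

noncomputable def rr (k : ℕ) : MvPolynomial (Fin 2) ℚ :=
  ∑ n ∈ Finset.range ((k - 2) / 2 + 1),
    C (Aq n (k - 2 - 2 * n)) * (X 0 - X 1) ^ (2 * n) * (X 0 + X 1) ^ (k - 2 - 2 * n)

lemma rr_symm (k : ℕ) : rename (Equiv.swap (0 : Fin 2) 1) (rr k) = rr k := by
  unfold rr
  rw [map_sum]
  refine Finset.sum_congr rfl fun n _ => ?_
  rw [map_mul, map_mul, map_pow, map_pow, map_sub, map_add, rename_C, rename_X, rename_X,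
    Equiv.swap_apply_left, Equiv.swap_apply_right]
  have h1 : (X 1 - X 0 : MvPolynomial (Fin 2) ℚ) ^ (2 * n) = (X 0 - X 1) ^ (2 * n) := by
    rw [show (X 1 - X 0 : MvPolynomial (Fin 2) ℚ) = -(X 0 - X 1) by ring,
      Even.neg_pow (even_two_mul n)]
  rw [h1, add_comm (X 1 : MvPolynomial (Fin 2) ℚ) (X 0)]

lemma rr_homog (k : ℕ) (hk : 2 ≤ k) : (rr k).IsHomogeneous (k - 2) := by
  unfold rr
  apply MvPolynomial.IsHomogeneous.sum
  intro n hn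
  rw [mem_range] at hn
  have h2n : 2 * n ≤ k - 2 := by omega
  have H : MvPolynomial.IsHomogeneous
      (C (Aq n (k - 2 - 2 * n)) * (X 0 - X 1) ^ (2 * n) * (X 0 + X 1) ^ (k - 2 - 2 * n)
        : MvPolynomial (Fin 2) ℚ)
      (0 + 1 * (2 * n) + 1 * (k - 2 - 2 * n)) :=
    ((isHomogeneous_C _ _).mul
      ((((isHomogeneous_X _ 0).sub (isHomogeneous_X _ 1))).pow (2 * n))).mul
      ((((isHomogeneous_X _ 0).add (isHomogeneous_X _ 1))).pow (k - 2 - 2 * n))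
  have e : 0 + 1 * (2 * n) + 1 * (k - 2 - 2 * n) = k - 2 := by omega
  rwa [e] at H

lemma rr_two : rr 2 = C (1 / 8 : ℚ) := by
  unfold rr
  norm_num [Aq]

lemma rr_three : rr 3 = C (1 / 8 : ℚ) * (X 0 + X 1) := by
  unfold rr
  norm_num [Aq]

lemma rr_four : rr 4 = C (1 / 128 : ℚ) *
    (13 * ((X 0 : MvPolynomial (Fin 2) ℚ) ^ 2 + X 1 ^ 2) + 22 * X 0 * X 1) := by
  unfold rr
  rw [show (4 - 2) / 2 + 1 = 2 from rfl]
  rw [Finset.sum_range_succ, Finset.sum_range_one]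
  norm_num [Aq]
  apply MvPolynomial.funext
  intro x
  simp only [map_add, map_mul, map_pow, map_sub, eval_C, eval_X, map_ofNat]
  norm_num
  ring

lemma aeval_rr (x y : ℝ) (k : ℕ) :
    (aeval ![x, y] (rr (k + 2)) : ℝ) = ∑ n ∈ Finset.range (k / 2 + 1),
      (catalan n : ℝ) * (((k - 2 * n) + (2 * n + 1)).choose (2 * n + 1) : ℝ)
        / 2 ^ (4 * n + 3 + (k - 2 * n)) * (x - y) ^ (2 * n) * (x + y) ^ (k - 2 * n) := by
  unfold rr
  rw [show k + 2 - 2 = k from by omega]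
  rw [map_sum]
  refine Finset.sum_congr rfl fun n _ => ?_
  rw [map_mul, map_mul, map_pow, map_pow, map_sub, map_add, aeval_X, aeval_X, aeval_C]
  have hev : (algebraMap ℚ ℝ) (Aq n (k - 2 * n)) = (catalan n : ℝ)
      * (((k - 2 * n) + (2 * n + 1)).choose (2 * n + 1) : ℝ) / 2 ^ (4 * n + 3 + (k - 2 * n)) := by
    rw [eq_ratCast, Aq]
    push_cast
    ring
  rw [hev]
  simp [Matrix.cons_val_zero, Matrix.cons_val_one, Matrix.head_cons]


lemma term_eq (cat ch X Y H : ℝ) (n m : ℕ) :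
    cat * ch / 2 ^ (4 * n + 3 + m) * X ^ (2 * n) * Y ^ m * H ^ (2 * n + m + 2)
    = cat / 2 ^ (2 * n + 1) * (H ^ 2 / 4) * (H * X / 2) ^ (2 * n) * (ch * (H * Y / 2) ^ m) := by
  rw [show 4 * n + 3 + m = (2 * n + 1) + (2 * n) + 2 + m by omega]
  rw [pow_add, pow_add, pow_add (2:ℝ) (2*n+1), div_pow (H * X), div_pow (H * Y), mul_pow H X,
    mul_pow H Y, pow_add H (2*n+m) 2, pow_add H (2*n) m]
  field_simp
  ring

lemma rowval (c w D A : ℝ) (n : ℕ) (hD : D ≠ 0) :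
    c * A * w ^ (2 * n) * (1 / D ^ (2 * n + 2)) = A / D ^ 2 * (c * (w ^ 2 / D ^ 2) ^ n) := by
  rw [div_pow, ← pow_mul, pow_add, pow_mul]
  field_simp
  ring

end Stmt2Aux

open Stmt2Aux

theorem stmt_2 :
    ∃ r : ℕ → MvPolynomial (Fin 2) ℚ,
      (∀ k, 2 ≤ k → rename (Equiv.swap (0 : Fin 2) 1) (r k) = r k) ∧
      (∀ k, 2 ≤ k → (r k).IsHomogeneous (k - 2)) ∧
      r 2 = C (1 / 8) ∧
      r 3 = C (1 / 8) * (X 0 + X 1) ∧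
      r 4 = C (1 / 128) * (13 * (X 0 ^ 2 + X 1 ^ 2) + 22 * X 0 * X 1) ∧
      ∀ h : ℝ, 0 < h → ∀ x y : ℝ, |x| < 1 / h → |y| < 1 / h →
        Summable (fun k : ℕ => |(aeval ![x, y] (r (k + 2)) : ℝ) * h ^ (k + 2)|) ∧
        Phi x y h =
          1 - (x - y) ^ 2 * ∑' k : ℕ, (aeval ![x, y] (r (k + 2)) : ℝ) * h ^ (k + 2) := by
  refine ⟨rr, fun k _ => rr_symm k, fun k hk => rr_homog k hk, rr_two, rr_three, rr_four, ?_⟩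
  intro h hh x y hx hy
  have hhne : h ≠ 0 := ne_of_gt hh
  have hxp : |h * x| < 1 := by
    rw [abs_mul, abs_of_pos hh]
    calc h * |x| < h * (1 / h) := by exact mul_lt_mul_of_pos_left hx hh
      _ = 1 := by field_simp
  have hyp : |h * y| < 1 := by
    rw [abs_mul, abs_of_pos hh]
    calc h * |y| < h * (1 / h) := by exact mul_lt_mul_of_pos_left hy hh
      _ = 1 := by field_simp
  obtain ⟨hx1, hx2⟩ := abs_lt.mp hxp
  obtain ⟨hy1, hy2⟩ := abs_lt.mp hyp
  set w := h * (x - y) / 2 with hw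
  set tv := h * (x + y) / 2 with htv
  have hwabs : |w| = |h * x - h * y| / 2 := by rw [hw, mul_sub, abs_div, abs_two]
  have htabs : |tv| = |h * x + h * y| / 2 := by rw [htv, mul_add, abs_div, abs_two]
  have key1 : |w| + |tv| < 1 := by
    rw [hwabs, htabs]
    rcases abs_cases (h * x - h * y) with ⟨e1, _⟩ | ⟨e1, _⟩ <;>
      rcases abs_cases (h * x + h * y) with ⟨e2, _⟩ | ⟨e2, _⟩ <;>
      rw [e1, e2] <;> linarith
  have habs_t : |tv| < 1 :=
    lt_of_le_of_lt (le_add_of_nonneg_left (abs_nonneg w)) key1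
  obtain ⟨htv1, htv2⟩ := abs_lt.mp habs_t
  have hD : 0 < 1 - tv := by linarith
  have hDne : (1 - tv) ≠ 0 := ne_of_gt hD
  have hD' : 0 < 1 - |tv| := by linarith [abs_nonneg w]
  have hD'ne : (1 - |tv|) ≠ 0 := ne_of_gt hD'
  have hwD' : |w| < 1 - |tv| := by linarith
  have hwD : |w| < 1 - tv := lt_of_lt_of_le hwD' (by linarith [le_abs_self tv])
  set u := w ^ 2 / (1 - tv) ^ 2 with hu
  have hu0 : 0 ≤ u := by rw [hu]; positivity
  have hu1 : u < 1 := by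
    rw [hu, div_lt_one (by positivity)]
    nlinarith [abs_nonneg w, sq_abs w]
  set u' := w ^ 2 / (1 - |tv|) ^ 2 with hu'
  have hu'0 : 0 ≤ u' := by rw [hu']; positivity
  have hu'1 : u' < 1 := by
    rw [hu', div_lt_one (by positivity)]
    nlinarith [abs_nonneg w, sq_abs w]
  set F : ℕ × ℕ → ℝ := fun q =>
    cc q.1 * (h ^ 2 / 4) * w ^ (2 * q.1) *
      (((q.2 + (2 * q.1 + 1)).choose (2 * q.1 + 1) : ℝ) * tv ^ q.2) with hF
  have hwpow : ∀ n : ℕ, 0 ≤ w ^ (2 * n) := fun n => by rw [pow_mul]; positivity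
  have hKn : ∀ n : ℕ, 0 ≤ cc n * (h ^ 2 / 4) * w ^ (2 * n) := fun n =>
    mul_nonneg (mul_nonneg (cc_nonneg n) (by positivity)) (hwpow n)
  -- row sums
  have hrow : ∀ n : ℕ, HasSum (fun m => F (n, m))
      (cc n * (h ^ 2 / 4) * w ^ (2 * n) * (1 / (1 - tv) ^ (2 * n + 2))) := by
    intro n
    have hb := (hasSum_choose_mul_geometric_of_norm_lt_one (2 * n + 1) (r := tv)
      (by rwa [Real.norm_eq_abs])).mul_left (cc n * (h ^ 2 / 4) * w ^ (2 * n))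
    rw [show 2 * n + 1 + 1 = 2 * n + 2 by omega] at hb
    exact hb
  have hrowN : ∀ n : ℕ, HasSum (fun m => |F (n, m)|)
      (cc n * (h ^ 2 / 4) * w ^ (2 * n) * (1 / (1 - |tv|) ^ (2 * n + 2))) := by
    intro n
    have hb := (hasSum_choose_mul_geometric_of_norm_lt_one (2 * n + 1) (r := |tv|)
      (by rw [Real.norm_eq_abs, abs_abs]; exact habs_t)).mul_left
        (cc n * (h ^ 2 / 4) * w ^ (2 * n))
    rw [show 2 * n + 1 + 1 = 2 * n + 2 by omega] at hb
    have e : ∀ m : ℕ, cc n * (h ^ 2 / 4) * w ^ (2 * n) *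
        (((m + (2 * n + 1)).choose (2 * n + 1) : ℝ) * |tv| ^ m) = |F (n, m)| := by
      intro m
      rw [hF]
      simp only []
      rw [abs_mul, abs_of_nonneg (hKn n), abs_mul, abs_pow,
        abs_of_nonneg (by positivity : (0:ℝ) ≤ (((m + (2 * n + 1)).choose (2 * n + 1) : ℝ)))]
    exact hb.congr_fun fun m => (e m).symm
  have hNsum : Summable (fun n =>
      cc n * (h ^ 2 / 4) * w ^ (2 * n) * (1 / (1 - |tv|) ^ (2 * n + 2))) := by
    have hs := (summable_cc_mul_pow hu'0 hu'1).mul_left ((h ^ 2 / 4) / (1 - |tv|) ^ 2)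
    refine hs.congr fun n => ?_
    rw [hu', ← rowval _ _ _ _ n hD'ne]
  have hFnorm : Summable (fun q : ℕ × ℕ => |F q|) := by
    refine (summable_prod_of_nonneg (fun q => abs_nonneg (F q))).mpr
      ⟨fun n => (hrowN n).summable, ?_⟩
    refine hNsum.congr fun n => ?_
    exact ((hrowN n).tsum_eq).symm
  have hFsum0 : Summable F := by
    apply Summable.of_norm
    simpa [Real.norm_eq_abs] using hFnorm
  set TT := (h ^ 2 / 4) / (1 - tv) ^ 2 * ∑' n, cc n * u ^ n with hTT
  have hFsum : HasSum F TT := by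
    have h0 := hFsum0.hasSum
    have e0 : ∑' q, F q = ∑' n, ∑' m, F (n, m) :=
      Summable.tsum_prod' hFsum0 (fun n => (hrow n).summable)
    have e1 : ∀ n : ℕ, ∑' m, F (n, m) = (h ^ 2 / 4) / (1 - tv) ^ 2 * (cc n * u ^ n) := by
      intro n
      rw [(hrow n).tsum_eq, hu]
      exact rowval _ _ _ _ n hDne
    rwa [e0, tsum_congr e1, tsum_mul_left, ← hTT] at h0
  set G : ℕ × ℕ → ℝ := fun q => if 2 * q.2 ≤ q.1 then F (q.2, q.1 - 2 * q.2) else 0 with hG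
  set iem : ℕ × ℕ → ℕ × ℕ := fun p => (2 * p.1 + p.2, p.1) with hiem
  have hinj : Function.Injective iem := by
    intro a b hab
    rw [hiem] at hab
    have h1 : 2 * a.1 + a.2 = 2 * b.1 + b.2 := congrArg Prod.fst hab
    have h2 : a.1 = b.1 := congrArg Prod.snd hab
    exact Prod.ext h2 (by omega)
  have hGi : G ∘ iem = F := by
    funext p
    simp only [Function.comp_apply, hG, hiem]
    rw [if_pos (by omega : 2 * p.1 ≤ 2 * p.1 + p.2)]
    rw [show 2 * p.1 + p.2 - 2 * p.1 = p.2 by omega]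
  have hG0 : ∀ q ∉ Set.range iem, G q = 0 := by
    intro q hq
    rw [hG]
    simp only []
    rw [if_neg]
    intro hle
    exact hq ⟨(q.2, q.1 - 2 * q.2), by rw [hiem]; exact Prod.ext (by simp; omega) rfl⟩
  have hGsum : HasSum G TT := (hinj.hasSum_iff hG0).mp (by rwa [hGi])
  have hGrow : ∀ k : ℕ, HasSum (fun n => G (k, n))
      (∑ n ∈ Finset.range (k / 2 + 1), F (n, k - 2 * n)) := by
    intro k
    have hz : ∀ n ∉ Finset.range (k / 2 + 1), G (k, n) = 0 := by
      intro n hn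
      rw [Finset.mem_range, not_lt] at hn
      rw [hG]
      exact if_neg (by omega)
    have hs := hasSum_sum_of_ne_finset_zero (L := SummationFilter.unconditional _) hz
    have e : ∑ n ∈ Finset.range (k / 2 + 1), G (k, n)
        = ∑ n ∈ Finset.range (k / 2 + 1), F (n, k - 2 * n) := by
      refine Finset.sum_congr rfl fun n hn => ?_
      rw [Finset.mem_range] at hn
      rw [hG]
      exact if_pos (by omega)
    rwa [e] at hs
  have hT : HasSum (fun k => ∑ n ∈ Finset.range (k / 2 + 1), F (n, k - 2 * n)) TT :=
    hGsum.prod_fiberwise hGrow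
  -- identification of the terms
  have hterm : ∀ k : ℕ, (aeval ![x, y] (rr (k + 2)) : ℝ) * h ^ (k + 2)
      = ∑ n ∈ Finset.range (k / 2 + 1), F (n, k - 2 * n) := by
    intro k
    rw [aeval_rr, Finset.sum_mul]
    refine Finset.sum_congr rfl fun n hn => ?_
    rw [Finset.mem_range] at hn
    rw [hF]
    simp only []
    unfold cc
    rw [show k + 2 = 2 * n + (k - 2 * n) + 2 by omega]
    rw [term_eq, hw, htv]
  refine ⟨?_, ?_⟩
  · -- summability
    have hGN : Summable (fun q : ℕ × ℕ => |G q|) := by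
      refine (hinj.summable_iff ?_).mp ?_
      · intro q hq
        rw [hG0 q hq, abs_zero]
      · have : (fun q => |G q|) ∘ iem = fun q => |F q| := by
          funext p
          simp only [Function.comp_apply]
          rw [show G (iem p) = (G ∘ iem) p from rfl, hGi]
        rw [this]
        exact hFnorm
    have hGNrow : ∀ k : ℕ, HasSum (fun n => |G (k, n)|)
        (∑ n ∈ Finset.range (k / 2 + 1), |F (n, k - 2 * n)|) := by
      intro k
      have hz : ∀ n ∉ Finset.range (k / 2 + 1), |G (k, n)| = 0 := by
        intro n hn
        rw [Finset.mem_range, not_lt] at hn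
        rw [hG]
        simp only []
        rw [if_neg (by omega), abs_zero]
      have hs := hasSum_sum_of_ne_finset_zero (L := SummationFilter.unconditional _) hz
      have e : ∑ n ∈ Finset.range (k / 2 + 1), |G (k, n)|
          = ∑ n ∈ Finset.range (k / 2 + 1), |F (n, k - 2 * n)| := by
        refine Finset.sum_congr rfl fun n hn => ?_
        rw [Finset.mem_range] at hn
        rw [hG]
        simp only []
        rw [if_pos (by omega)]
      rwa [e] at hs
    have hNsum2 : Summable (fun k => ∑ n ∈ Finset.range (k / 2 + 1), |F (n, k - 2 * n)|) :=
      (hGN.hasSum.prod_fiberwise hGNrow).summable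
    refine Summable.of_nonneg_of_le (fun k => abs_nonneg _) (fun k => ?_) hNsum2
    rw [hterm k]
    exact Finset.abs_sum_le_sum_abs _ _
  · -- the identity
    have htsum : ∑' k, (aeval ![x, y] (rr (k + 2)) : ℝ) * h ^ (k + 2) = TT := by
      rw [tsum_congr hterm]
      exact hT.tsum_eq
    rw [htsum, hTT]
    have hnum : (1 - h * x) * (1 - h * y) = (1 - tv) ^ 2 * (1 - u) := by
      rw [hu]
      have e : (1 - tv) ^ 2 * (1 - w ^ 2 / (1 - tv) ^ 2) = (1 - tv) ^ 2 - w ^ 2 := by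
        field_simp
      rw [e, htv, hw]
      ring
    have hPhi : Phi x y h = Real.sqrt (1 - u) := by
      rw [Phi, ← htv, hnum, Real.sqrt_mul (sq_nonneg _), Real.sqrt_sq hD.le,
        mul_comm, mul_div_assoc, div_self hDne, mul_one]
    rw [hPhi]
    have hug : u * (∑' n, cc n * u ^ n) = 1 - Real.sqrt (1 - u) := sqrt_series hu0 hu1
    have hxy : (x - y) ^ 2 * ((h ^ 2 / 4) / (1 - tv) ^ 2 * (∑' n, cc n * u ^ n))
        = u * (∑' n, cc n * u ^ n) := by
      rw [hu]
      have e : w ^ 2 = (x - y) ^ 2 * (h ^ 2 / 4) := by rw [hw]; ring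
      rw [e]
      ring
    rw [hxy, hug]
    ring
end

section
/- For every h > 0 and every real x with x < 1/h, the quotient (Φ(x, y; h) − 1)/(x − y)² tends to −(1/8)·(h/(1 − h x))² as y tends to x with y ≠ x (y ranging over reals with y < 1/h). -/
open Filter

theorem stmt_3 (h : ℝ) (hh : 0 < h) (x : ℝ) (hx : x < 1 / h) :
    Tendsto (fun y : ℝ => (Phi x y h - 1) / (x - y) ^ 2)
      (nhdsWithin x ({y : ℝ | y < 1 / h} \ {x}))
      (nhds (-(1 / 8) * (h / (1 - h * x)) ^ 2)) := by
  have ha : 0 < 1 - h * x := by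
    have := (lt_div_iff₀ hh).mp hx
    nlinarith
  set g : ℝ → ℝ := fun y =>
    -h ^ 2 / (((1 - h * x) + (1 - h * y)) *
      (Real.sqrt (1 - h * x) + Real.sqrt (1 - h * y)) ^ 2) with hg
  have hsa : 0 < Real.sqrt (1 - h * x) := Real.sqrt_pos.mpr ha
  have hgx : g x = -(1 / 8) * (h / (1 - h * x)) ^ 2 := by
    have h1 : (Real.sqrt (1 - h * x) + Real.sqrt (1 - h * x)) ^ 2
        = 4 * (1 - h * x) := by
      have := Real.sq_sqrt ha.le
      ring_nf
      nlinarith [Real.sq_sqrt ha.le]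
    rw [hg]
    simp only
    rw [h1]
    field_simp
    ring
  have hcont : ContinuousAt g x := by
    apply ContinuousAt.div continuousAt_const
    · fun_prop
    · have : ((1 - h * x) + (1 - h * x)) *
        (Real.sqrt (1 - h * x) + Real.sqrt (1 - h * x)) ^ 2 > 0 := by positivity
      exact ne_of_gt this
  have htend : Tendsto g (nhdsWithin x ({y : ℝ | y < 1 / h} \ {x})) (nhds (g x)) :=
    hcont.continuousWithinAt.tendsto
  rw [← hgx]
  refine htend.congr' ?_
  filter_upwards [self_mem_nhdsWithin] with y hy
  obtain ⟨hy1, hy2⟩ := hy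
  have hb : 0 < 1 - h * y := by
    have := (lt_div_iff₀ hh).mp hy1
    nlinarith
  have hyx : y ≠ x := hy2
  set s := Real.sqrt (1 - h * x) with hs
  set t := Real.sqrt (1 - h * y) with ht
  have hst : 0 < t := Real.sqrt_pos.mpr hb
  have hs2 : s ^ 2 = 1 - h * x := Real.sq_sqrt ha.le
  have ht2 : t ^ 2 = 1 - h * y := Real.sq_sqrt hb.le
  have hsqrt : Real.sqrt ((1 - h * x) * (1 - h * y)) = s * t := by
    rw [Real.sqrt_mul ha.le]
  have hxy : x - y = (t ^ 2 - s ^ 2) / h := by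
    rw [hs2, ht2]; field_simp; ring
  have hne : s ≠ t := by
    intro hEq
    apply hyx
    have : (1 : ℝ) - h * y = 1 - h * x := by rw [← hs2, ← ht2, hEq]
    have : h * y = h * x := by linarith
    exact mul_left_cancel₀ (ne_of_gt hh) this
  have hdenom : (1 : ℝ) - h * (x + y) / 2 = (s ^ 2 + t ^ 2) / 2 := by
    rw [hs2, ht2]; ring
  rw [hg]
  simp only [Phi, hsqrt, hdenom, hxy, ← hs2, ← ht2]
  have hst2 : s ^ 2 + t ^ 2 > 0 := by positivity
  have hstne : s - t ≠ 0 := sub_ne_zero.mpr hne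
  have hspt : s + t ≠ 0 := by positivity
  have hh' : h ≠ 0 := ne_of_gt hh
  have hD : -(s ^ 2 * t ^ 4) - s ^ 4 * t ^ 2 + s ^ 6 + t ^ 6 ≠ 0 := by
    have hfac : -(s ^ 2 * t ^ 4) - s ^ 4 * t ^ 2 + s ^ 6 + t ^ 6
        = (s - t) ^ 2 * (s + t) ^ 2 * (s ^ 2 + t ^ 2) := by ring
    rw [hfac]
    exact mul_ne_zero (mul_ne_zero (pow_ne_zero _ hstne) (pow_ne_zero _ hspt))
      (ne_of_gt hst2)
  have e1 : Real.sqrt (t ^ 2) = t := Real.sqrt_sq hst.le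
  have e2 : Real.sqrt (s ^ 2 * t ^ 2) = s * t := by
    rw [← mul_pow]; exact Real.sqrt_sq (by positivity)
  simp only [e1, e2]
  have hD2 : -(s ^ 2 * t ^ 2 * 2) + s ^ 4 + t ^ 4 ≠ 0 := by
    have hfac2 : -(s ^ 2 * t ^ 2 * 2) + s ^ 4 + t ^ 4 = ((s - t) * (s + t)) ^ 2 := by ring
    rw [hfac2]
    exact pow_ne_zero _ (mul_ne_zero hstne hspt)
  field_simp
  linear_combination mul_inv_cancel₀ hD2
end

section
/- Let f be an entire function whose Maclaurin coefficients a_n are all real, and assume: (positivity) there is r₀ > 0 with f(r) > 0 for all real r ≥ r₀; let a(r) := r f′(r)/f(r) and b(r) := r a′(r) for r ≥ r₀; (capture) b(r) → ∞ as r → ∞; (locality) there is a function θ₀ : ℝ → ℝ with 0 < θ₀(r) < π for r ≥ r₀ such that the supremum over real θ with |θ| ≤ θ₀(r) of |f(r e^{iθ}) · e^{−iθ a(r) + θ² b(r)/2} / f(r) − 1| tends to 0 as r → ∞; (decay) the supremum over real θ with θ₀(r) ≤ |θ| ≤ π of √(b(r)) · |f(r e^{iθ})| / f(r) tends to 0 as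 r → ∞. Then the normal approximation holds uniformly in n: the supremum over n ∈ ℕ of | a_n r^n √(2π b(r)) / f(r) − exp(−(n − a(r))² / (2 b(r))) | tends to 0 as the real variable r tends to ∞. -/
open Real Filter MeasureTheory Set intervalIntegral

noncomputable section
namespace Hay


lemma summable_abs (coef : ℕ → ℝ) (r : ℝ) (hr : 0 < r)
    (hsum : ∀ s : ℝ, Summable fun m : ℕ => coef m * s ^ m) :
    Summable fun m : ℕ => |coef m| * r ^ m := by
  have h2 : Tendsto (fun m : ℕ => |coef m * (2 * r) ^ m|) atTop (nhds 0) := by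
    simpa using (hsum (2 * r)).tendsto_atTop_zero.abs
  obtain ⟨C, hC⟩ := h2.bddAbove_range
  have hCb : ∀ m : ℕ, |coef m * (2 * r) ^ m| ≤ C := fun m => hC ⟨m, rfl⟩
  have key : ∀ m : ℕ, |coef m| * r ^ m ≤ C * (1 / 2) ^ m := by
    intro m
    have h1 : |coef m| * r ^ m = |coef m * (2 * r) ^ m| * (1 / 2) ^ m := by
      rw [abs_mul, _root_.abs_pow, abs_of_pos (by linarith : (0:ℝ) < 2 * r)]
      rw [mul_assoc, ← mul_pow]
      have : 2 * r * (1 / 2) = r := by ring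
      rw [this]
    rw [h1]
    exact mul_le_mul_of_nonneg_right (hCb m) (by positivity)
  refine Summable.of_nonneg_of_le (fun m => by positivity) key ?_
  exact (summable_geometric_of_lt_one (by norm_num) (by norm_num)).mul_left C




lemma orth (k : ℤ) :
    (∫ θ in (-π)..π, Complex.exp (k * θ * Complex.I)) =
      if k = 0 then (2 * π : ℂ) else 0 := by
  rcases eq_or_ne k 0 with hk | hk
  · simp only [hk, Int.cast_zero, zero_mul, Complex.exp_zero, if_pos]
    simp
    ring
  · rw [if_neg hk]
    have hc : (k : ℂ) * Complex.I ≠ 0 := by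
      simp [Complex.I_ne_zero, Int.cast_ne_zero, hk]
    have h1 : ∀ θ : ℝ, (k : ℂ) * θ * Complex.I = ((k : ℂ) * Complex.I) * θ := by
      intro θ; ring
    simp_rw [h1]
    rw [integral_exp_mul_complex hc]
    have h2 : Complex.exp ((k : ℂ) * Complex.I * π) =
        Complex.exp ((k : ℂ) * Complex.I * (-π : ℝ)) := by
      rw [Complex.exp_eq_exp_iff_exp_sub_eq_one]
      have : (k : ℂ) * Complex.I * π - (k : ℂ) * Complex.I * (-π : ℝ) =
          (k : ℂ) * (2 * π * Complex.I) := by push_cast; ring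
      rw [this, Complex.exp_int_mul_two_pi_mul_I]
    rw [h2]
    simp

lemma cauchy (coef : ℕ → ℝ) (f : ℂ → ℂ)
    (hf : ∀ z : ℂ, HasSum (fun m : ℕ => (coef m : ℂ) * z ^ m) (f z))
    (r : ℝ) (hr : 0 < r) (hsum : Summable fun m : ℕ => |coef m| * r ^ m) (n : ℕ) :
    (∫ θ in (-π)..π, f ((r : ℂ) * Complex.exp ((θ : ℂ) * Complex.I)) *
        Complex.exp (((-((n : ℝ) * θ) : ℝ) : ℂ) * Complex.I))
      = 2 * π * (coef n * r ^ n : ℝ) := by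
  set F : ℕ → C(ℝ, ℂ) := fun m =>
    ⟨fun θ => ((coef m * r ^ m : ℝ) : ℂ) *
        Complex.exp (((((m : ℝ) - n) * θ : ℝ) : ℂ) * Complex.I), by fun_prop⟩ with hF
  have hnorm : ∀ m (θ : ℝ), ‖F m θ‖ = |coef m| * r ^ m := by
    intro m θ
    simp only [hF, ContinuousMap.coe_mk, norm_mul, Complex.norm_exp_ofReal_mul_I, mul_one,
      Complex.norm_real]
    simp [Real.norm_eq_abs, abs_mul, _root_.abs_pow, abs_of_pos hr]
  have hbd : Summable fun m : ℕ =>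
      ‖(F m).restrict (⟨uIcc (-π) π, isCompact_uIcc⟩ : TopologicalSpace.Compacts ℝ)‖ := by
    refine Summable.of_nonneg_of_le (fun m => norm_nonneg _) (fun m => ?_) hsum
    refine (ContinuousMap.norm_le _ (by positivity)).mpr fun x => ?_
    simp only [ContinuousMap.restrict_apply]
    exact le_of_eq (hnorm m x)
  have hHS := hasSum_intervalIntegral_of_summable_norm (a := -π) (b := π) hbd
  -- pointwise sum identity
  have hpt : ∀ θ : ℝ, (∑' m : ℕ, F m θ) =
      f ((r : ℂ) * Complex.exp ((θ : ℂ) * Complex.I)) *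
        Complex.exp (((-((n : ℝ) * θ) : ℝ) : ℂ) * Complex.I) := by
    intro θ
    have hz := (hf ((r : ℂ) * Complex.exp ((θ : ℂ) * Complex.I))).mul_right
      (Complex.exp (((-((n : ℝ) * θ) : ℝ) : ℂ) * Complex.I))
    have heq : (fun m : ℕ => (coef m : ℂ) * ((r : ℂ) * Complex.exp ((θ : ℂ) * Complex.I)) ^ m *
        Complex.exp (((-((n : ℝ) * θ) : ℝ) : ℂ) * Complex.I)) = fun m => F m θ := by
      funext m
      simp only [hF, ContinuousMap.coe_mk]
      rw [mul_pow, ← Complex.exp_nat_mul,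
        show ∀ x y : ℂ, (coef m : ℂ) * ((r : ℂ) ^ m * x) * y =
          ((coef m : ℂ) * (r : ℂ) ^ m) * (x * y) from fun x y => by ring,
        ← Complex.exp_add]
      congr 1
      · push_cast; ring
      · congr 1; push_cast; ring
    rw [heq] at hz
    exact hz.tsum_eq
  have hint : ∀ m : ℕ, (∫ θ in (-π)..π, F m θ) =
      if m = n then 2 * π * ((coef n * r ^ n : ℝ) : ℂ) else 0 := by
    intro m
    have : (∫ θ in (-π)..π, F m θ) = ((coef m * r ^ m : ℝ) : ℂ) *
        ∫ θ in (-π)..π, Complex.exp ((((m : ℤ) - n : ℤ) : ℂ) * θ * Complex.I) := by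
      rw [← intervalIntegral.integral_const_mul]
      congr 1
      funext θ
      simp only [hF, ContinuousMap.coe_mk]
      congr 2
      push_cast
      ring
    rw [this, orth]
    rcases eq_or_ne m n with h | h
    · rw [if_pos (by omega), if_pos h, h]; ring
    · rw [if_neg (by omega), if_neg h, mul_zero]
  have hval : HasSum (fun m : ℕ => ∫ θ in (-π)..π, F m θ)
      (2 * π * ((coef n * r ^ n : ℝ) : ℂ)) := by
    rw [show (fun m : ℕ => ∫ θ in (-π)..π, F m θ) = fun m =>
      if m = n then 2 * π * ((coef n * r ^ n : ℝ) : ℂ) else 0 from funext hint]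
    exact hasSum_ite_eq n _
  have := hHS.unique hval
  rw [← this]
  exact (intervalIntegral.integral_congr (fun θ _ => (hpt θ))).symm




set_option maxHeartbeats 1000000

lemma sq_le_helper {x y : ℝ} (hy : 0 ≤ y) (h : x ^ 2 ≤ y ^ 2) : x ≤ y :=
  (abs_le_of_sq_le_sq' h hy).2

lemma main_est (f : ℂ → ℂ) (r b A F t0 ε₁ ε₂ ε₃ : ℝ) (c : ℕ → ℝ)
    (hb : 1 ≤ b) (hF : 0 < F) (ht0 : 0 < t0) (ht0π : t0 < π)
    (hfc : Continuous fun θ : ℝ => f ((r : ℂ) * Complex.exp ((θ : ℂ) * Complex.I)))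
    (hI : ∀ n : ℕ, (∫ θ in (-π)..π, f ((r : ℂ) * Complex.exp ((θ : ℂ) * Complex.I)) *
        Complex.exp (((-((n : ℝ) * θ) : ℝ) : ℂ) * Complex.I)) = 2 * π * ((c n : ℝ) : ℂ))
    (hloc : ∀ θ : ℝ, |θ| ≤ t0 →
      ‖f ((r : ℂ) * Complex.exp ((θ : ℂ) * Complex.I)) *
          Complex.exp (((-(θ * A) : ℝ) : ℂ) * Complex.I + ((θ ^ 2 * b / 2 : ℝ) : ℂ)) /
          ((F : ℝ) : ℂ) - 1‖ ≤ ε₁)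
    (hdec : ∀ θ : ℝ, t0 ≤ |θ| → |θ| ≤ π →
      ‖f ((r : ℂ) * Complex.exp ((θ : ℂ) * Complex.I))‖ ≤ ε₂ * F / Real.sqrt b)
    (hε₃ : Real.exp (-(b * t0 ^ 2) / 4) ≤ ε₃) :
    ∀ n : ℕ, |c n * Real.sqrt (2 * π * b) / F - Real.exp (-((n : ℝ) - A) ^ 2 / (2 * b))| ≤
      ε₁ + 3 * ε₂ + 3 * ε₃ := by
  intro n
  have hb0 : (0 : ℝ) < b := lt_of_lt_of_le one_pos hb
  have hF' : ((F : ℝ) : ℂ) ≠ 0 := by exact_mod_cast hF.ne'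
  have hsb : 0 < Real.sqrt b := Real.sqrt_pos.mpr hb0
  set φ : ℝ → ℂ := fun θ => f ((r : ℂ) * Complex.exp ((θ : ℂ) * Complex.I)) with hφ
  set ψ : ℝ → ℂ := fun θ => φ θ * Complex.exp (((-((n : ℝ) * θ) : ℝ) : ℂ) * Complex.I) with hψ
  set K : ℝ := Real.sqrt (b / (2 * π)) with hK
  set G : ℝ → ℂ := fun θ => Complex.exp (((-(b / 2) * θ ^ 2 : ℝ) : ℂ) +
    (((A - (n : ℝ)) * θ : ℝ) : ℂ) * Complex.I) with hG
  set η : ℝ → ℂ := fun θ => φ θ *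
      Complex.exp (((-(θ * A) : ℝ) : ℂ) * Complex.I + ((θ ^ 2 * b / 2 : ℝ) : ℂ)) /
      ((F : ℝ) : ℂ) - 1 with hη
  have hK0 : 0 ≤ K := Real.sqrt_nonneg _
  have hKsq : K ^ 2 = b / (2 * π) := Real.sq_sqrt (by positivity)
  have hbsq : (Real.sqrt b) ^ 2 = b := Real.sq_sqrt hb0.le
  -- continuity
  have hψc : Continuous ψ := by fun_prop
  have hGc : Continuous G := by fun_prop
  have hηc : Continuous η := by fun_prop
  have hKG : K * Real.sqrt (2 * π / b) = 1 := by
    rw [hK, ← Real.sqrt_mul (by positivity), show b / (2 * π) * (2 * π / b) = 1 from by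
      field_simp, Real.sqrt_one]
  -- norm of G
  have hGnorm : ∀ θ : ℝ, ‖G θ‖ = Real.exp (-(b / 2) * θ ^ 2) := by
    intro θ
    rw [hG, Complex.norm_exp]
    simp only [Complex.add_re, Complex.ofReal_re, Complex.mul_re, Complex.I_re, Complex.I_im,
      Complex.ofReal_im]
    ring
  -- G in quadratic form
  have hGform : G = fun θ : ℝ => Complex.exp (((-(b / 2) : ℝ) : ℂ) * (θ : ℂ) ^ 2 +
      ((((A - (n : ℝ)) : ℝ) : ℂ) * Complex.I) * (θ : ℂ) + 0) := by
    funext θ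
    rw [hG]
    exact congrArg Complex.exp (by push_cast; ring)
  have hGint : Integrable G := by
    rw [hGform]
    have := integrable_cexp_quadratic' (b := ((-(b / 2) : ℝ) : ℂ))
      (by simp [hb0]) ((((A - (n : ℝ)) : ℝ) : ℂ) * Complex.I) 0
    exact this
  -- value of full Gaussian integral
  have hGfull : (K : ℂ) * ∫ θ : ℝ, G θ =
      ((Real.exp (-((n : ℝ) - A) ^ 2 / (2 * b)) : ℝ) : ℂ) := by
    have hbne : (b : ℂ) ≠ 0 := by exact_mod_cast hb0.ne'
    have hq := integral_cexp_quadratic (b := ((-(b / 2) : ℝ) : ℂ))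
      (by simp [hb0]) ((((A - (n : ℝ)) : ℝ) : ℂ) * Complex.I) 0
    rw [← hGform] at hq
    have hfac : ((π : ℂ) / -((-(b / 2) : ℝ) : ℂ)) ^ (1 / 2 : ℂ) =
        ((Real.sqrt (2 * π / b) : ℝ) : ℂ) := by
      have h1 : ((π : ℂ) / -((-(b / 2) : ℝ) : ℂ)) = ((2 * π / b : ℝ) : ℂ) := by
        push_cast
        field_simp
      rw [h1, Real.sqrt_eq_rpow, Complex.ofReal_cpow (by positivity)]
      norm_num
    have harg : (0 : ℂ) - ((((A - (n : ℝ)) : ℝ) : ℂ) * Complex.I) ^ 2 /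
        (4 * ((-(b / 2) : ℝ) : ℂ)) = ((-((n : ℝ) - A) ^ 2 / (2 * b) : ℝ) : ℂ) := by
      rw [mul_pow, Complex.I_sq]
      push_cast
      field_simp
      ring
    rw [hq, hfac, harg, ← Complex.ofReal_exp, ← Complex.ofReal_mul, ← Complex.ofReal_mul]
    exact Complex.ofReal_inj.mpr (by rw [← mul_assoc, hKG, one_mul])
  -- pointwise representation on the middle
  have hkey : ∀ θ : ℝ, |θ| ≤ t0 → ψ θ = ((F : ℝ) : ℂ) * ((1 + η θ) * G θ) := by
    intro θ _
    have h2 : Complex.exp (((-(θ * A) : ℝ) : ℂ) * Complex.I + ((θ ^ 2 * b / 2 : ℝ) : ℂ)) * G θ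
        = Complex.exp (((-((n : ℝ) * θ) : ℝ) : ℂ) * Complex.I) := by
      rw [hG, ← Complex.exp_add]
      exact congrArg Complex.exp (by push_cast; ring)
    rw [hψ, hη]
    simp only
    rw [show (1 : ℂ) + (φ θ *
        Complex.exp (((-(θ * A) : ℝ) : ℂ) * Complex.I + ((θ ^ 2 * b / 2 : ℝ) : ℂ)) /
        ((F : ℝ) : ℂ) - 1) = φ θ *
        Complex.exp (((-(θ * A) : ℝ) : ℂ) * Complex.I + ((θ ^ 2 * b / 2 : ℝ) : ℂ)) /
        ((F : ℝ) : ℂ) from by ring]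
    rw [show ((F : ℝ) : ℂ) * (φ θ *
        Complex.exp (((-(θ * A) : ℝ) : ℂ) * Complex.I + ((θ ^ 2 * b / 2 : ℝ) : ℂ)) /
        ((F : ℝ) : ℂ) * G θ) = φ θ *
        (Complex.exp (((-(θ * A) : ℝ) : ℂ) * Complex.I + ((θ ^ 2 * b / 2 : ℝ) : ℂ)) * G θ)
      from by field_simp]
    rw [h2]
  -- splittings
  have hi1 : IntervalIntegrable ψ volume (-π) (-t0) := hψc.intervalIntegrable _ _
  have hi2 : IntervalIntegrable ψ volume (-t0) t0 := hψc.intervalIntegrable _ _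
  have hi3 : IntervalIntegrable ψ volume t0 π := hψc.intervalIntegrable _ _
  have hsplit : (∫ θ in (-π)..(-t0), ψ θ) + (∫ θ in (-t0)..t0, ψ θ) + (∫ θ in t0..π, ψ θ)
      = ∫ θ in (-π)..π, ψ θ := by
    rw [integral_add_adjacent_intervals hi1 hi2,
      integral_add_adjacent_intervals (hi1.trans hi2) hi3]
  have hGsplit : (∫ θ in Iic (-t0), G θ) + (∫ θ in (-t0)..t0, G θ) + (∫ θ in Ioi t0, G θ)
      = ∫ θ : ℝ, G θ := by
    have h1 := integral_Iic_add_Ioi (b := t0) hGint.integrableOn hGint.integrableOn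
    have h2 := integral_Iic_sub_Iic (f := G) (μ := volume) (a := -t0) (b := t0)
      hGint.integrableOn hGint.integrableOn
    rw [← h1, ← h2]
    ring
  have hmid : (∫ θ in (-t0)..t0, ψ θ) = ((F : ℝ) : ℂ) *
      ((∫ θ in (-t0)..t0, G θ) + ∫ θ in (-t0)..t0, η θ * G θ) := by
    rw [← intervalIntegral.integral_add (f := G) (g := fun θ => η θ * G θ) (hGc.intervalIntegrable _ _)
      ((hηc.mul hGc).intervalIntegrable _ _), ← intervalIntegral.integral_const_mul]
    refine intervalIntegral.integral_congr fun θ hθ => ?_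
    have hθ' : |θ| ≤ t0 := by
      rw [uIcc_of_le (by linarith)] at hθ
      exact abs_le.mpr ⟨hθ.1, hθ.2⟩
    rw [hkey θ hθ']
    ring
  -- representation of the target difference
  have hxrepr : ((c n * Real.sqrt (2 * π * b) / F : ℝ) : ℂ) -
      ((Real.exp (-((n : ℝ) - A) ^ 2 / (2 * b)) : ℝ) : ℂ) =
      ((K / F : ℝ) : ℂ) * (∫ θ in (-π)..(-t0), ψ θ) +
      ((K / F : ℝ) : ℂ) * (∫ θ in t0..π, ψ θ) +
      (K : ℂ) * (∫ θ in (-t0)..t0, η θ * G θ) -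
      (K : ℂ) * (∫ θ in Iic (-t0), G θ) - (K : ℂ) * (∫ θ in Ioi t0, G θ) := by
    have hK1 : Real.sqrt (2 * π * b) = K * (2 * π) := by
      rw [hK, show (2 * π : ℝ) = Real.sqrt ((2 * π) ^ 2) from
        (Real.sqrt_sq (by positivity)).symm, ← Real.sqrt_mul (by positivity)]
      congr 1
      rw [Real.sqrt_sq (by positivity)]
      field_simp
    have hπ : ((π : ℝ) : ℂ) ≠ 0 := by exact_mod_cast Real.pi_ne_zero
    have hsum3 : ((∫ θ in (-π)..(-t0), ψ θ) + (∫ θ in (-t0)..t0, ψ θ) + (∫ θ in t0..π, ψ θ))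
        = 2 * ((π : ℝ) : ℂ) * ((c n : ℝ) : ℂ) := hsplit.trans (hI n)
    rw [hmid] at hsum3
    have hc : ((c n : ℝ) : ℂ) = ((∫ θ in (-π)..(-t0), ψ θ) + ((F : ℝ) : ℂ) *
        ((∫ θ in (-t0)..t0, G θ) + ∫ θ in (-t0)..t0, η θ * G θ) + (∫ θ in t0..π, ψ θ)) /
        (2 * ((π : ℝ) : ℂ)) := by
      rw [hsum3]
      field_simp
    rw [← hGfull, ← hGsplit, hK1]
    push_cast
    rw [hc]
    field_simp
    ring
  -- nonnegativity of the epsilons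
  have hCd : 0 ≤ ε₂ * F / Real.sqrt b :=
    le_trans (norm_nonneg _) (hdec π (by rw [abs_of_pos pi_pos]; linarith) (le_of_eq (abs_of_pos pi_pos)))
  have hε₂0 : 0 ≤ ε₂ := by
    by_contra h
    push_neg at h
    have : ε₂ * F / Real.sqrt b < 0 := div_neg_of_neg_of_pos (mul_neg_of_neg_of_pos h hF) hsb
    linarith
  have hε₁0 : 0 ≤ ε₁ := le_trans (norm_nonneg _) (hloc 0 (by simp [ht0.le]))
  have hε₃0 : 0 ≤ ε₃ := le_trans (Real.exp_pos _).le hε₃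
  -- bound the two decay pieces
  have hdecb : ∀ θ : ℝ, t0 ≤ |θ| → |θ| ≤ π → ‖ψ θ‖ ≤ ε₂ * F / Real.sqrt b := by
    intro θ h1 h2
    rw [hψ]
    simp only [norm_mul, Complex.norm_exp_ofReal_mul_I, mul_one]
    exact hdec θ h1 h2
  have hbml : ‖(∫ θ in (-π)..(-t0), ψ θ)‖ ≤ ε₂ * F / Real.sqrt b * π := by
    have := intervalIntegral.norm_integral_le_of_norm_le_const
      (C := ε₂ * F / Real.sqrt b) (f := ψ) (a := -π) (b := -t0) ?_
    · refine le_trans this ?_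
      have : |(-t0) - (-π)| = π - t0 := by rw [abs_of_nonneg (by linarith)]; ring
      rw [this]
      nlinarith
    · intro x hx
      rw [Set.uIoc_of_le (by linarith)] at hx
      have hx1 : -π < x := hx.1
      have hx2 : x ≤ -t0 := hx.2
      have hax : |x| = -x := abs_of_neg (by linarith)
      exact hdecb x (by rw [hax]; linarith) (by rw [hax]; linarith)
  have hbmr : ‖(∫ θ in t0..π, ψ θ)‖ ≤ ε₂ * F / Real.sqrt b * π := by
    have := intervalIntegral.norm_integral_le_of_norm_le_const
      (C := ε₂ * F / Real.sqrt b) (f := ψ) (a := t0) (b := π) ?_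
    · refine le_trans this ?_
      have : |π - t0| = π - t0 := by rw [abs_of_nonneg (by linarith)]
      rw [this]
      nlinarith
    · intro x hx
      rw [Set.uIoc_of_le (by linarith)] at hx
      have hax : |x| = x := abs_of_pos (by linarith [hx.1])
      exact hdecb x (by rw [hax]; exact hx.1.le) (by rw [hax]; exact hx.2)
  -- numeric sqrt facts
  have hfac1 : K * π / Real.sqrt b ≤ 3 / 2 := by
    refine sq_le_helper (by norm_num) ?_
    rw [div_pow, mul_pow, hKsq, hbsq]
    rw [show b / (2 * π) * π ^ 2 / b = π / 2 from by field_simp]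
    nlinarith [Real.pi_le_four]
  have hfac2 : K * Real.sqrt (4 * π / b) ≤ 3 / 2 := by
    refine sq_le_helper (by norm_num) ?_
    rw [mul_pow, hKsq, Real.sq_sqrt (by positivity)]
    rw [show b / (2 * π) * (4 * π / b) = 2 from by field_simp; ring]
    norm_num
  -- bound the eta piece
  have hbη : ‖(∫ θ in (-t0)..t0, η θ * G θ)‖ ≤ ε₁ * Real.sqrt (2 * π / b) := by
    have hgint : IntervalIntegrable (fun θ : ℝ => ε₁ * Real.exp (-(b / 2) * θ ^ 2))
        volume (-t0) t0 := (Continuous.intervalIntegrable (by fun_prop) _ _)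
    have h1 : ‖∫ θ in (-t0)..t0, η θ * G θ‖ ≤
        |∫ θ in (-t0)..t0, ε₁ * Real.exp (-(b / 2) * θ ^ 2)| := by
      apply intervalIntegral.norm_integral_le_abs_of_norm_le ?_ hgint
      rw [MeasureTheory.ae_restrict_iff' measurableSet_uIoc]
      filter_upwards with θ hθ
      have habs : |θ| ≤ t0 := by
        rw [Set.uIoc_of_le (by linarith)] at hθ
        exact abs_le.mpr ⟨hθ.1.le, hθ.2⟩
      rw [norm_mul, hGnorm]
      have hηb : ‖η θ‖ ≤ ε₁ := hloc θ habs
      exact mul_le_mul hηb le_rfl (Real.exp_pos _).le hε₁0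
    have h2 : (∫ θ in (-t0)..t0, ε₁ * Real.exp (-(b / 2) * θ ^ 2)) ≤
        ε₁ * Real.sqrt (2 * π / b) := by
      rw [intervalIntegral.integral_const_mul]
      apply mul_le_mul_of_nonneg_left ?_ hε₁0
      have h3 : (∫ θ in (-t0)..t0, Real.exp (-(b / 2) * θ ^ 2)) ≤
          ∫ θ : ℝ, Real.exp (-(b / 2) * θ ^ 2) := by
        rw [intervalIntegral.integral_of_le (by linarith)]
        exact setIntegral_le_integral (integrable_exp_neg_mul_sq (by positivity))
          (ae_of_all _ fun x => (Real.exp_pos _).le)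
      rw [integral_gaussian] at h3
      rwa [show π / (b / 2) = 2 * π / b from by field_simp] at h3
    have h4 : (0 : ℝ) ≤ ∫ θ in (-t0)..t0, ε₁ * Real.exp (-(b / 2) * θ ^ 2) :=
      intervalIntegral.integral_nonneg (by linarith) fun x _ => by positivity
    rw [abs_of_nonneg h4] at h1
    linarith
  -- bound the gaussian tails
  have htail : ∀ s : Set ℝ, MeasurableSet s → (∀ x ∈ s, t0 ≤ |x|) →
      ‖(∫ θ in s, G θ)‖ ≤ Real.exp (-(b * t0 ^ 2) / 4) * Real.sqrt (4 * π / b) := by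
    intro s hs hxs
    have h1 : ‖∫ θ in s, G θ‖ ≤ ∫ θ in s, ‖G θ‖ := norm_integral_le_integral_norm _
    have h2 : (∫ θ in s, ‖G θ‖) ≤
        ∫ θ in s, Real.exp (-(b * t0 ^ 2) / 4) * Real.exp (-(b / 4) * θ ^ 2) := by
      apply setIntegral_mono_on (hGint.norm.integrableOn)
        (((integrable_exp_neg_mul_sq (by positivity : (0:ℝ) < b / 4)).const_mul
          _).integrableOn) hs
      intro x hx
      rw [hGnorm, ← Real.exp_add]
      apply Real.exp_le_exp.mpr
      have hx2 : t0 ^ 2 ≤ x ^ 2 := by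
        have := pow_le_pow_left₀ ht0.le (hxs x hx) 2
        rwa [sq_abs] at this
      nlinarith
    have h3 : (∫ θ in s, Real.exp (-(b * t0 ^ 2) / 4) * Real.exp (-(b / 4) * θ ^ 2)) ≤
        Real.exp (-(b * t0 ^ 2) / 4) * Real.sqrt (4 * π / b) := by
      rw [MeasureTheory.integral_const_mul]
      apply mul_le_mul_of_nonneg_left ?_ (Real.exp_pos _).le
      have h4 := setIntegral_le_integral (μ := volume) (s := s)
        (integrable_exp_neg_mul_sq (show (0:ℝ) < b / 4 by positivity))
        (ae_of_all _ fun x => (Real.exp_pos _).le)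
      rw [integral_gaussian] at h4
      rwa [show π / (b / 4) = 4 * π / b from by field_simp] at h4
    linarith
  have hbt1 : ‖(∫ θ in Iic (-t0), G θ)‖ ≤
      Real.exp (-(b * t0 ^ 2) / 4) * Real.sqrt (4 * π / b) :=
    htail _ measurableSet_Iic fun x hx => le_abs.mpr (Or.inr (by
      simp only [mem_Iic] at hx; linarith))
  have hbt2 : ‖(∫ θ in Ioi t0, G θ)‖ ≤
      Real.exp (-(b * t0 ^ 2) / 4) * Real.sqrt (4 * π / b) :=
    htail _ measurableSet_Ioi fun x hx => le_abs.mpr (Or.inl (by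
      simp only [mem_Ioi] at hx; linarith))
  -- assemble
  rw [show |c n * Real.sqrt (2 * π * b) / F - Real.exp (-((n : ℝ) - A) ^ 2 / (2 * b))| =
      ‖((c n * Real.sqrt (2 * π * b) / F : ℝ) : ℂ) -
        ((Real.exp (-((n : ℝ) - A) ^ 2 / (2 * b)) : ℝ) : ℂ)‖ from by
    rw [← Complex.ofReal_sub, Complex.norm_real, Real.norm_eq_abs]]
  rw [hxrepr]
  have hnK : ‖((K / F : ℝ) : ℂ)‖ = K / F := by
    rw [Complex.norm_real, Real.norm_eq_abs, abs_of_nonneg (div_nonneg hK0 hF.le)]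
  have hnK2 : ‖(K : ℂ)‖ = K := by
    rw [Complex.norm_real, Real.norm_eq_abs, abs_of_nonneg hK0]
  have e1 : ‖((K / F : ℝ) : ℂ) * (∫ θ in (-π)..(-t0), ψ θ)‖ ≤ (3 / 2) * ε₂ := by
    rw [norm_mul, hnK]
    calc K / F * ‖(∫ θ in (-π)..(-t0), ψ θ)‖ ≤ K / F * (ε₂ * F / Real.sqrt b * π) := by
          exact mul_le_mul_of_nonneg_left hbml (div_nonneg hK0 hF.le)
      _ = ε₂ * (K * π / Real.sqrt b) := by field_simp
      _ ≤ ε₂ * (3 / 2) := mul_le_mul_of_nonneg_left hfac1 hε₂0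
      _ = (3 / 2) * ε₂ := by ring
  have e2 : ‖((K / F : ℝ) : ℂ) * (∫ θ in t0..π, ψ θ)‖ ≤ (3 / 2) * ε₂ := by
    rw [norm_mul, hnK]
    calc K / F * ‖(∫ θ in t0..π, ψ θ)‖ ≤ K / F * (ε₂ * F / Real.sqrt b * π) := by
          exact mul_le_mul_of_nonneg_left hbmr (div_nonneg hK0 hF.le)
      _ = ε₂ * (K * π / Real.sqrt b) := by field_simp
      _ ≤ ε₂ * (3 / 2) := mul_le_mul_of_nonneg_left hfac1 hε₂0
      _ = (3 / 2) * ε₂ := by ring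
  have e3 : ‖(K : ℂ) * (∫ θ in (-t0)..t0, η θ * G θ)‖ ≤ ε₁ := by
    rw [norm_mul, hnK2]
    calc K * ‖(∫ θ in (-t0)..t0, η θ * G θ)‖ ≤ K * (ε₁ * Real.sqrt (2 * π / b)) :=
          mul_le_mul_of_nonneg_left hbη hK0
      _ = ε₁ * (K * Real.sqrt (2 * π / b)) := by ring
      _ = ε₁ := by rw [hKG, mul_one]
  have e4 : ‖(K : ℂ) * (∫ θ in Iic (-t0), G θ)‖ ≤ (3 / 2) * ε₃ := by
    rw [norm_mul, hnK2]
    calc K * ‖(∫ θ in Iic (-t0), G θ)‖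
        ≤ K * (Real.exp (-(b * t0 ^ 2) / 4) * Real.sqrt (4 * π / b)) :=
          mul_le_mul_of_nonneg_left hbt1 hK0
      _ = Real.exp (-(b * t0 ^ 2) / 4) * (K * Real.sqrt (4 * π / b)) := by ring
      _ ≤ ε₃ * (3 / 2) := by
          apply mul_le_mul hε₃ hfac2 (by positivity) hε₃0
      _ = (3 / 2) * ε₃ := by ring
  have e5 : ‖(K : ℂ) * (∫ θ in Ioi t0, G θ)‖ ≤ (3 / 2) * ε₃ := by
    rw [norm_mul, hnK2]
    calc K * ‖(∫ θ in Ioi t0, G θ)‖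
        ≤ K * (Real.exp (-(b * t0 ^ 2) / 4) * Real.sqrt (4 * π / b)) :=
          mul_le_mul_of_nonneg_left hbt2 hK0
      _ = Real.exp (-(b * t0 ^ 2) / 4) * (K * Real.sqrt (4 * π / b)) := by ring
      _ ≤ ε₃ * (3 / 2) := by
          apply mul_le_mul hε₃ hfac2 (by positivity) hε₃0
      _ = (3 / 2) * ε₃ := by ring
  calc ‖((K / F : ℝ) : ℂ) * (∫ θ in (-π)..(-t0), ψ θ) +
        ((K / F : ℝ) : ℂ) * (∫ θ in t0..π, ψ θ) +
        (K : ℂ) * (∫ θ in (-t0)..t0, η θ * G θ) -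
        (K : ℂ) * (∫ θ in Iic (-t0), G θ) - (K : ℂ) * (∫ θ in Ioi t0, G θ)‖
      ≤ ‖((K / F : ℝ) : ℂ) * (∫ θ in (-π)..(-t0), ψ θ) +
        ((K / F : ℝ) : ℂ) * (∫ θ in t0..π, ψ θ) +
        (K : ℂ) * (∫ θ in (-t0)..t0, η θ * G θ) -
        (K : ℂ) * (∫ θ in Iic (-t0), G θ)‖ + ‖(K : ℂ) * (∫ θ in Ioi t0, G θ)‖ :=
        norm_sub_le _ _
    _ ≤ ‖((K / F : ℝ) : ℂ) * (∫ θ in (-π)..(-t0), ψ θ) +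
        ((K / F : ℝ) : ℂ) * (∫ θ in t0..π, ψ θ) +
        (K : ℂ) * (∫ θ in (-t0)..t0, η θ * G θ)‖ + ‖(K : ℂ) * (∫ θ in Iic (-t0), G θ)‖ +
        ‖(K : ℂ) * (∫ θ in Ioi t0, G θ)‖ := by
        have := norm_sub_le (((K / F : ℝ) : ℂ) * (∫ θ in (-π)..(-t0), ψ θ) +
          ((K / F : ℝ) : ℂ) * (∫ θ in t0..π, ψ θ) +
          (K : ℂ) * (∫ θ in (-t0)..t0, η θ * G θ)) ((K : ℂ) * (∫ θ in Iic (-t0), G θ))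
        linarith
    _ ≤ (‖((K / F : ℝ) : ℂ) * (∫ θ in (-π)..(-t0), ψ θ)‖ +
        ‖((K / F : ℝ) : ℂ) * (∫ θ in t0..π, ψ θ)‖ +
        ‖(K : ℂ) * (∫ θ in (-t0)..t0, η θ * G θ)‖) + ‖(K : ℂ) * (∫ θ in Iic (-t0), G θ)‖ +
        ‖(K : ℂ) * (∫ θ in Ioi t0, G θ)‖ := by
        have h1 := norm_add_le (((K / F : ℝ) : ℂ) * (∫ θ in (-π)..(-t0), ψ θ) +
          ((K / F : ℝ) : ℂ) * (∫ θ in t0..π, ψ θ))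
          ((K : ℂ) * (∫ θ in (-t0)..t0, η θ * G θ))
        have h2 := norm_add_le (((K / F : ℝ) : ℂ) * (∫ θ in (-π)..(-t0), ψ θ))
          (((K / F : ℝ) : ℂ) * (∫ θ in t0..π, ψ θ))
        linarith
    _ ≤ ε₁ + 3 * ε₂ + 3 * ε₃ := by linarith




lemma phi_cont (coef : ℕ → ℝ) (f : ℂ → ℂ)
    (hf : ∀ z : ℂ, HasSum (fun m : ℕ => (coef m : ℂ) * z ^ m) (f z)) (r : ℝ) (hr : 0 < r)
    (hsum : Summable fun m : ℕ => |coef m| * r ^ m) :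
    Continuous fun θ : ℝ => f ((r : ℂ) * Complex.exp ((θ : ℂ) * Complex.I)) := by
  have heq : (fun θ : ℝ => f ((r : ℂ) * Complex.exp ((θ : ℂ) * Complex.I))) =
      fun θ : ℝ => ∑' m : ℕ, ((coef m * r ^ m : ℝ) : ℂ) *
        Complex.exp ((((m : ℝ) * θ : ℝ) : ℂ) * Complex.I) := by
    funext θ
    rw [← (hf ((r : ℂ) * Complex.exp ((θ : ℂ) * Complex.I))).tsum_eq]
    congr 1
    funext m
    rw [mul_pow, ← Complex.exp_nat_mul,
      show ∀ x : ℂ, (coef m : ℂ) * ((r : ℂ) ^ m * x) = ((coef m : ℂ) * (r : ℂ) ^ m) * x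
        from fun x => by ring]
    congr 1
    · push_cast; ring
    · congr 1; push_cast; ring
  rw [heq]
  apply continuous_tsum ?_ hsum ?_
  · intro m; fun_prop
  · intro m θ
    rw [norm_mul, Complex.norm_exp_ofReal_mul_I, mul_one, Complex.norm_real, Real.norm_eq_abs,
      abs_mul, _root_.abs_pow, abs_of_pos hr]


end Hay
end

section
open Real Filter

/-- Hayman's normal approximation for `H`-admissible entire functions. -/
theorem stmt_10 (coef : ℕ → ℝ) (f : ℂ → ℂ)
    (hf : ∀ z : ℂ, HasSum (fun n : ℕ => (coef n : ℂ) * z ^ n) (f z))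
    (fr : ℝ → ℝ) (hfrsum : ∀ r : ℝ, HasSum (fun n : ℕ => coef n * r ^ n) (fr r))
    (r₀ : ℝ) (hr₀ : 0 < r₀) (hpos : ∀ r : ℝ, r₀ ≤ r → 0 < fr r)
    (A B : ℝ → ℝ)
    (hA : ∀ r : ℝ, A r = r * deriv fr r / fr r)
    (hB : ∀ r : ℝ, B r = r * deriv A r)
    (hcap : Tendsto B atTop atTop)
    (θ₀ : ℝ → ℝ) (hθ₀ : ∀ r : ℝ, r₀ ≤ r → 0 < θ₀ r ∧ θ₀ r < π)
    (hloc : ∀ ε : ℝ, 0 < ε → ∃ R : ℝ, ∀ r : ℝ, R ≤ r → ∀ θ : ℝ, |θ| ≤ θ₀ r →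
      ‖f ((r : ℂ) * Complex.exp ((θ : ℂ) * Complex.I)) *
          Complex.exp (((-(θ * A r) : ℝ) : ℂ) * Complex.I + ((θ ^ 2 * B r / 2 : ℝ) : ℂ)) /
          ((fr r : ℝ) : ℂ) - 1‖ ≤ ε)
    (hdec : ∀ ε : ℝ, 0 < ε → ∃ R : ℝ, ∀ r : ℝ, R ≤ r → ∀ θ : ℝ, θ₀ r ≤ |θ| → |θ| ≤ π →
      Real.sqrt (B r) * ‖f ((r : ℂ) * Complex.exp ((θ : ℂ) * Complex.I))‖ / fr r ≤ ε) :
    ∀ ε : ℝ, 0 < ε → ∃ R : ℝ, ∀ r : ℝ, R ≤ r → ∀ n : ℕ,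
      |coef n * r ^ n * Real.sqrt (2 * π * B r) / fr r -
          Real.exp (-((n : ℝ) - A r) ^ 2 / (2 * B r))| ≤ ε := by
  intro ε hε
  set ε₁ : ℝ := min (ε / 3) (1 / 2) with hε₁def
  have hε₁pos : 0 < ε₁ := lt_min (by linarith) (by norm_num)
  obtain ⟨R₁, hR₁⟩ := hloc ε₁ hε₁pos
  obtain ⟨R₂, hR₂⟩ := hdec (ε / 9) (by linarith)
  obtain ⟨R₃, hR₃⟩ := hdec 1 one_pos
  obtain ⟨R₄, hR₄⟩ := eventually_atTop.1
    (hcap.eventually_ge_atTop (max 1 ((162 / ε ^ 2) ^ 2)))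
  refine ⟨max (max R₁ R₂) (max (max R₃ R₄) r₀), fun r hr => ?_⟩
  have hrr₀ : r₀ ≤ r := le_trans (le_max_right _ _) (le_trans (le_max_right _ _) hr)
  have hrR₁ : R₁ ≤ r := le_trans (le_max_left _ _) (le_trans (le_max_left _ _) hr)
  have hrR₂ : R₂ ≤ r := le_trans (le_max_right _ _) (le_trans (le_max_left _ _) hr)
  have hrR₃ : R₃ ≤ r := le_trans (le_max_left _ _)
    (le_trans (le_max_left _ _) (le_trans (le_max_right _ _) hr))
  have hrR₄ : R₄ ≤ r := le_trans (le_max_right _ _)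
    (le_trans (le_max_left _ _) (le_trans (le_max_right _ _) hr))
  have hrpos : 0 < r := lt_of_lt_of_le hr₀ hrr₀
  have hFpos : 0 < fr r := hpos r hrr₀
  have ht0 : 0 < θ₀ r := (hθ₀ r hrr₀).1
  have ht0π : θ₀ r < π := (hθ₀ r hrr₀).2
  have hbB := hR₄ r hrR₄
  have hb1 : 1 ≤ B r := le_trans (le_max_left _ _) hbB
  have hblarge : (162 / ε ^ 2) ^ 2 ≤ B r := le_trans (le_max_right _ _) hbB
  have hb0 : 0 < B r := lt_of_lt_of_le one_pos hb1
  have hsb : 0 < Real.sqrt (B r) := Real.sqrt_pos.mpr hb0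
  have hsum : Summable fun m : ℕ => |coef m| * r ^ m :=
    Hay.summable_abs coef r hrpos (fun s => (hfrsum s).summable)
  -- the quantitative tail bound
  have hquart : Real.exp (-(B r * θ₀ r ^ 2) / 4) ≤ ε / 9 := by
    have ht0abs : |θ₀ r| = θ₀ r := abs_of_pos ht0
    have h1 := hR₁ r hrR₁ (θ₀ r) ht0abs.le
    have h2 := hR₃ r hrR₃ (θ₀ r) ht0abs.ge (ht0abs.le.trans ht0π.le)
    set φ := f ((r : ℂ) * Complex.exp (((θ₀ r : ℝ) : ℂ) * Complex.I)) with hφdef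
    have hEnorm : ‖Complex.exp (((-(θ₀ r * A r) : ℝ) : ℂ) * Complex.I +
        ((θ₀ r ^ 2 * B r / 2 : ℝ) : ℂ))‖ = Real.exp (θ₀ r ^ 2 * B r / 2) := by
      rw [Complex.norm_exp]
      simp only [Complex.add_re, Complex.ofReal_re, Complex.mul_re, Complex.I_re, Complex.I_im,
        Complex.ofReal_im]
      ring_nf
    have hnx : ‖φ * Complex.exp (((-(θ₀ r * A r) : ℝ) : ℂ) * Complex.I +
        ((θ₀ r ^ 2 * B r / 2 : ℝ) : ℂ)) / ((fr r : ℝ) : ℂ)‖ =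
        ‖φ‖ * Real.exp (θ₀ r ^ 2 * B r / 2) / fr r := by
      rw [norm_div, norm_mul, hEnorm, Complex.norm_real, Real.norm_eq_abs, abs_of_pos hFpos]
    have hlow : 1 / 2 ≤ ‖φ‖ * Real.exp (θ₀ r ^ 2 * B r / 2) / fr r := by
      have h3 := norm_sub_norm_le (1 : ℂ) (φ * Complex.exp (((-(θ₀ r * A r) : ℝ) : ℂ) *
        Complex.I + ((θ₀ r ^ 2 * B r / 2 : ℝ) : ℂ)) / ((fr r : ℝ) : ℂ))
      rw [norm_one, norm_sub_rev, hnx] at h3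
      have hε₁half : ε₁ ≤ 1 / 2 := min_le_right _ _
      linarith
    have hup : ‖φ‖ / fr r ≤ 1 / Real.sqrt (B r) := by
      rw [div_le_div_iff₀ hFpos hsb]
      rw [div_le_one hFpos] at h2
      nlinarith
    have hexp : Real.sqrt (B r) / 2 ≤ Real.exp (θ₀ r ^ 2 * B r / 2) := by
      have e1 : ‖φ‖ * Real.exp (θ₀ r ^ 2 * B r / 2) / fr r =
          (‖φ‖ / fr r) * Real.exp (θ₀ r ^ 2 * B r / 2) := by ring
      rw [e1] at hlow
      have e2 : (‖φ‖ / fr r) * Real.exp (θ₀ r ^ 2 * B r / 2) ≤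
          (1 / Real.sqrt (B r)) * Real.exp (θ₀ r ^ 2 * B r / 2) :=
        mul_le_mul_of_nonneg_right hup (Real.exp_pos _).le
      have e3 : 1 / 2 ≤ (1 / Real.sqrt (B r)) * Real.exp (θ₀ r ^ 2 * B r / 2) := by linarith
      rw [div_le_iff₀ (by norm_num : (0:ℝ) < 2)]
      calc Real.sqrt (B r) ≤ Real.sqrt (B r) *
            ((1 / Real.sqrt (B r)) * Real.exp (θ₀ r ^ 2 * B r / 2) * 2) := by
            nlinarith [hsb]
        _ = Real.exp (θ₀ r ^ 2 * B r / 2) * 2 := by field_simp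
    apply Hay.sq_le_helper (by positivity)
    rw [sq, ← Real.exp_add, show -(B r * θ₀ r ^ 2) / 4 + -(B r * θ₀ r ^ 2) / 4 =
      -(θ₀ r ^ 2 * B r / 2) from by ring]
    have hX : Real.exp (-(θ₀ r ^ 2 * B r / 2)) ≤ 2 / Real.sqrt (B r) := by
      rw [Real.exp_neg]
      have := inv_anti₀ (by positivity : (0:ℝ) < Real.sqrt (B r) / 2) hexp
      rwa [inv_div] at this
    have hsqrtb : 162 / ε ^ 2 ≤ Real.sqrt (B r) := by
      rw [show (162 / ε ^ 2 : ℝ) = Real.sqrt ((162 / ε ^ 2) ^ 2) from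
        (Real.sqrt_sq (by positivity)).symm]
      exact Real.sqrt_le_sqrt hblarge
    have h5 : 2 / Real.sqrt (B r) ≤ (ε / 9) ^ 2 := by
      rw [div_le_iff₀ hsb]
      have h6 : (ε / 9) ^ 2 * (162 / ε ^ 2) ≤ (ε / 9) ^ 2 * Real.sqrt (B r) :=
        mul_le_mul_of_nonneg_left hsqrtb (by positivity)
      have h7 : (ε / 9) ^ 2 * (162 / ε ^ 2) = 2 := by field_simp; ring
      linarith
    linarith
  have hmain := Hay.main_est f r (B r) (A r) (fr r) (θ₀ r) ε₁ (ε / 9) (ε / 9)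
    (fun n => coef n * r ^ n) hb1 hFpos ht0 ht0π
    (Hay.phi_cont coef f hf r hrpos hsum)
    (fun n => Hay.cauchy coef f hf r hrpos hsum n)
    (fun θ hθ => hR₁ r hrR₁ θ hθ)
    (fun θ h1 h2 => by
      have h := hR₂ r hrR₂ θ h1 h2
      rw [div_le_iff₀ hFpos] at h
      rw [le_div_iff₀ hsb]
      nlinarith)
    hquart
  intro n
  have := hmain n
  have hε₁3 : ε₁ ≤ ε / 3 := min_le_left _ _
  calc |coef n * r ^ n * Real.sqrt (2 * π * B r) / fr r -
      Real.exp (-((n : ℝ) - A r) ^ 2 / (2 * B r))| ≤ ε₁ + 3 * (ε / 9) + 3 * (ε / 9) := this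
    _ ≤ ε := by linarith

end
end

section
/- Let f be an entire function whose Maclaurin coefficients a_n are all real, and assume: (positivity) there is r₀ > 0 with f(r) > 0 for all real r ≥ r₀; let a(r) := r f′(r)/f(r) and b(r) := r a′(r) for r ≥ r₀; (capture) b(r) → ∞ as r → ∞; (locality) there is a function θ₀ : ℝ → ℝ with 0 < θ₀(r) < π for r ≥ r₀ such that the supremum over real θ with |θ| ≤ θ₀(r) of |f(r e^{iθ}) · e^{−iθ a(r) + θ² b(r)/2} / f(r) − 1| tends to 0 as r → ∞; (decay) the supremum over real θ with θ₀(r) ≤ |θ| ≤ π of √(b(r)) · |f(r e^{iθ})| / f(r) tends to 0 as r → ∞. Then there is N ∈ ℕ such that for every n ≥ N the equation a(r) = n has a unique solution r_n in (r₀, ∞); moreover r_n → ∞ as n → ∞, and the Stirling-type formula holds: a_n · r_n^n · √(2π b(r_n)) / f(r_n) → 1 as n → ∞. -/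
open Real Filter MeasureTheory intervalIntegral
set_option maxHeartbeats 1000000



lemma summable_abs_aux (coef : ℕ → ℝ)
    (h : ∀ r : ℝ, Summable (fun n => coef n * r ^ n)) (r : ℝ) (hr : 0 ≤ r) :
    Summable (fun n => |coef n| * r ^ n) := by
  set s : ℝ := 2 * r + 2 with hs
  have hspos : 0 < s := by positivity
  have htend : Tendsto (fun n => |coef n * s ^ n|) atTop (nhds 0) := by
    simpa using ((h s).tendsto_atTop_zero).abs
  obtain ⟨C, hC⟩ := htend.bddAbove_range
  have hC' : ∀ n, |coef n| * s ^ n ≤ C := by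
    intro n
    have := hC (Set.mem_range_self (f := fun n => |coef n * s ^ n|) n)
    simpa [abs_mul, abs_pow, abs_of_pos hspos] using this
  have hhalf : r / s ≤ 1 / 2 := by
    rw [div_le_div_iff₀ hspos (by norm_num)]
    linarith
  refine Summable.of_nonneg_of_le
    (g := fun n => |coef n| * r ^ n) (f := fun n => C * (1/2) ^ n)
    (fun n => mul_nonneg (abs_nonneg _) (pow_nonneg hr n)) (fun n => ?_)
    ((summable_geometric_of_lt_one (by norm_num) (by norm_num)).mul_left C)
  have h1 : |coef n| * r ^ n = (|coef n| * s ^ n) * (r / s) ^ n := by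
      rw [div_pow, mul_assoc, mul_div_assoc', mul_div_cancel_left₀ _ (pow_ne_zero n hspos.ne')]
  rw [h1]
  have h2 : (r / s) ^ n ≤ (1/2 : ℝ) ^ n :=
    pow_le_pow_left₀ (by positivity) hhalf n
  have h3 : (0:ℝ) ≤ (r/s)^n := by positivity
  calc (|coef n| * s ^ n) * (r / s) ^ n ≤ C * (r/s)^n :=
        mul_le_mul_of_nonneg_right (hC' n) h3
    _ ≤ C * (1/2)^n := by
        apply mul_le_mul_of_nonneg_left h2
        exact le_trans (by positivity) (hC' 0)

lemma entire_aux (coef : ℕ → ℝ) (f : ℂ → ℂ)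
    (hf : ∀ z : ℂ, HasSum (fun n : ℕ => (coef n : ℂ) * z ^ n) (f z))
    (habs : ∀ r : ℝ, 0 ≤ r → Summable (fun n => |coef n| * r ^ n)) :
    AnalyticOnNhd ℂ f Set.univ := by
  set p := FormalMultilinearSeries.ofScalars ℂ (fun n => (coef n : ℂ)) with hp
  have hrad : p.radius = ⊤ := by
    apply p.radius_eq_top_of_summable_norm
    intro r
    have heq : (fun n => ‖p n‖ * (r:ℝ) ^ n) = fun n => |coef n| * (r:ℝ) ^ n := by
      funext n
      rw [hp, FormalMultilinearSeries.ofScalars_norm, Complex.norm_real, Real.norm_eq_abs]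
    rw [heq]
    exact habs r r.2
  have hball : HasFPowerSeriesOnBall f p 0 ⊤ := by
    refine ⟨by simp [hrad], by simp, ?_⟩
    intro y _
    have h2 : (fun n => p n fun _ => y) = (fun n => (coef n : ℂ) * y ^ n) := by
      funext n
      rw [hp, FormalMultilinearSeries.ofScalars_apply_eq, smul_eq_mul]
    rw [h2]
    simpa using hf y
  intro z _
  exact hball.analyticOnNhd z (by simp)



lemma integral_exp_mul_aux (c : ℂ) (hc : c ≠ 0) (a b : ℝ) :
    ∫ θ in a..b, Complex.exp (↑θ * c) = (Complex.exp (b * c) - Complex.exp (a * c)) / c := by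
  have hderiv : ∀ θ ∈ Set.uIcc a b,
      HasDerivAt (fun x : ℝ => Complex.exp (↑x * c) / c) (Complex.exp (↑θ * c)) θ := by
    intro θ _
    have h1 : HasDerivAt (fun x : ℝ => (↑x * c : ℂ)) c θ := by
      simpa using (Complex.ofRealCLM.hasDerivAt (x := θ)).mul_const c
    have h2 := h1.cexp
    have h3 := h2.div_const c
    rw [mul_div_cancel_right₀ _ hc] at h3
    exact h3
  have hint : IntervalIntegrable (fun θ : ℝ => Complex.exp (↑θ * c)) volume a b :=
    (Continuous.cexp (by continuity)).intervalIntegrable a b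
  rw [integral_eq_sub_of_hasDerivAt hderiv hint]
  push_cast
  ring

lemma integral_exp_int_aux (k : ℤ) :
    ∫ θ in (-π)..π, Complex.exp (↑θ * ((k : ℂ) * Complex.I))
      = if k = 0 then ((2 * π : ℝ) : ℂ) else 0 := by
  by_cases hk : k = 0
  · simp [hk]
    push_cast
    ring
  · rw [if_neg hk]
    have hc : (k : ℂ) * Complex.I ≠ 0 := by
      simp [Complex.I_ne_zero, Int.cast_eq_zero, hk]
    rw [integral_exp_mul_aux _ hc]
    have h1 : (↑π * ((k:ℂ) * Complex.I)) = (k : ℂ) * (↑π * Complex.I) := by ring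
    have h2 : (↑(-π) * ((k:ℂ) * Complex.I)) = (-k : ℂ) * (↑π * Complex.I) := by push_cast; ring
    rw [h1, h2]
    have h3 : ∀ m : ℤ, Complex.exp ((m : ℂ) * (↑π * Complex.I)) = (-1) ^ m := by
      intro m
      rw [Complex.exp_int_mul, Complex.exp_pi_mul_I]
    rw [h3 k]
    have : Complex.exp ((-k : ℂ) * (↑π * Complex.I)) = (-1) ^ (-k) := by
      rw [← h3 (-k)]; push_cast; ring_nf
    rw [this]
    have hpow : ((-1 : ℂ)) ^ (-k) = (-1) ^ k := by
      rw [zpow_neg]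
      rcases Int.even_or_odd k with he | ho
      · rw [he.neg_one_zpow]; norm_num
      · rw [ho.neg_one_zpow]; norm_num
    rw [hpow]
    simp

lemma cauchy_coef_aux (coef : ℕ → ℝ) (f : ℂ → ℂ)
    (hf : ∀ z : ℂ, HasSum (fun n : ℕ => (coef n : ℂ) * z ^ n) (f z))
    (habs : ∀ r : ℝ, 0 ≤ r → Summable (fun n => |coef n| * r ^ n))
    (r : ℝ) (hr : 0 < r) (n : ℕ) :
    ∫ θ in (-π)..π, f (↑r * Complex.exp (↑θ * Complex.I)) *
        Complex.exp (-(n : ℂ) * ↑θ * Complex.I)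
      = ((2 * π * (coef n * r ^ n) : ℝ) : ℂ) := by
  set F : ℕ → ℝ → ℂ := fun m θ =>
    (coef m : ℂ) * (↑r * Complex.exp (↑θ * Complex.I)) ^ m *
      Complex.exp (-(n : ℂ) * ↑θ * Complex.I) with hF
  have hnorm : ∀ m θ, ‖F m θ‖ = |coef m| * r ^ m := by
    intro m θ
    have e1 : ‖Complex.exp (↑θ * Complex.I)‖ = 1 := by
      rw [Complex.norm_exp]
      simp
    have e2 : ‖Complex.exp (-(n : ℂ) * ↑θ * Complex.I)‖ = 1 := by
      rw [Complex.norm_exp]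
      simp
    rw [hF]
    simp only [norm_mul, norm_pow, e1, e2, Complex.norm_real, Real.norm_eq_abs,
      Complex.norm_natCast]
    rw [abs_of_pos hr]
    ring
  have hFcont : ∀ m, Continuous (F m) := by
    intro m
    apply Continuous.mul
    · apply Continuous.mul continuous_const
      apply Continuous.pow
      exact continuous_const.mul (Continuous.cexp (by continuity))
    · exact Continuous.cexp (by continuity)
  have hμ : (volume (Set.Ioc (-π) π)).toReal = 2 * π := by
    rw [Real.volume_Ioc]
    rw [ENNReal.toReal_ofReal (by linarith [pi_pos])]
    ring
  have hFint : ∀ m, Integrable (F m) (volume.restrict (Set.Ioc (-π) π)) := by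
    intro m
    exact (hFcont m).integrableOn_Ioc
  have hFsum : Summable fun m => ∫ θ, ‖F m θ‖ ∂(volume.restrict (Set.Ioc (-π) π)) := by
    have heq : ∀ m, ∫ θ, ‖F m θ‖ ∂(volume.restrict (Set.Ioc (-π) π))
        = (|coef m| * r ^ m) * (2 * π) := by
      intro m
      simp only [hnorm]
      rw [setIntegral_const, measureReal_def, hμ]
      simp [smul_eq_mul]
      ring
    simp only [heq]
    exact ((habs r hr.le).mul_right _)
  have hkey := hasSum_integral_of_summable_integral_norm hFint hFsum
  have htsum : ∀ θ : ℝ, ∑' m, F m θ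
      = f (↑r * Complex.exp (↑θ * Complex.I)) * Complex.exp (-(n : ℂ) * ↑θ * Complex.I) := by
    intro θ
    exact ((hf _).mul_right _).tsum_eq
  have hIoc : ∫ θ, ∑' m, F m θ ∂(volume.restrict (Set.Ioc (-π) π))
      = ∫ θ in (-π)..π, f (↑r * Complex.exp (↑θ * Complex.I)) *
          Complex.exp (-(n : ℂ) * ↑θ * Complex.I) := by
    rw [intervalIntegral.integral_of_le (by linarith [pi_pos])]
    exact setIntegral_congr_fun measurableSet_Ioc (fun θ _ => htsum θ)
  rw [hIoc] at hkey
  -- compute each ∫ F m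
  have hterm : ∀ m, ∫ θ, F m θ ∂(volume.restrict (Set.Ioc (-π) π))
      = if m = n then ((2 * π * (coef n * r ^ n) : ℝ) : ℂ) else 0 := by
    intro m
    set k : ℤ := (m : ℤ) - (n : ℤ) with hk
    have hFe : ∀ θ : ℝ, F m θ = ((coef m : ℂ) * r ^ m) *
        Complex.exp (↑θ * ((k : ℂ) * Complex.I)) := by
      intro θ
      have hsplit : Complex.exp (↑θ * ((k : ℂ) * Complex.I))
          = Complex.exp ((m : ℕ) * (↑θ * Complex.I)) *
            Complex.exp (-(n : ℂ) * ↑θ * Complex.I) := by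
        rw [← Complex.exp_add]
        congr 1
        rw [hk]
        push_cast
        ring
      simp only [hF]
      rw [hsplit, mul_pow, ← Complex.exp_nat_mul]
      ring
    have : ∫ θ, F m θ ∂(volume.restrict (Set.Ioc (-π) π))
        = ((coef m : ℂ) * r ^ m) * ∫ θ in (-π)..π,
            Complex.exp (↑θ * ((k : ℂ) * Complex.I)) := by
      rw [intervalIntegral.integral_of_le (by linarith [pi_pos]), ← MeasureTheory.integral_const_mul]
      exact setIntegral_congr_fun measurableSet_Ioc (fun θ _ => hFe θ)
    rw [this, integral_exp_int_aux k]
    by_cases hmn : m = n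
    · subst hmn
      rw [if_pos (by omega), if_pos rfl]
      push_cast
      ring
    · rw [if_neg (by omega), if_neg hmn, mul_zero]
  rw [funext hterm] at hkey
  have hsingle : HasSum (fun m => if m = n then ((2 * π * (coef n * r ^ n) : ℝ) : ℂ) else 0)
      (((2 * π * (coef n * r ^ n) : ℝ) : ℂ)) := by
    have := hasSum_single (f := fun m => if m = n then ((2 * π * (coef n * r ^ n) : ℝ) : ℂ) else 0)
      n (fun m hm => by simp [hm])
    simpa using this
  exact (hsingle.unique hkey).symm

/-- Hayman's Stirling-type formula for `H`-admissible entire functions. -/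
theorem stmt_11 (coef : ℕ → ℝ) (f : ℂ → ℂ)
    (hf : ∀ z : ℂ, HasSum (fun n : ℕ => (coef n : ℂ) * z ^ n) (f z))
    (fr : ℝ → ℝ) (hfrsum : ∀ r : ℝ, HasSum (fun n : ℕ => coef n * r ^ n) (fr r))
    (r₀ : ℝ) (hr₀ : 0 < r₀) (hpos : ∀ r : ℝ, r₀ ≤ r → 0 < fr r)
    (A B : ℝ → ℝ)
    (hA : ∀ r : ℝ, A r = r * deriv fr r / fr r)
    (hB : ∀ r : ℝ, B r = r * deriv A r)
    (hcap : Tendsto B atTop atTop)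
    (θ₀ : ℝ → ℝ) (hθ₀ : ∀ r : ℝ, r₀ ≤ r → 0 < θ₀ r ∧ θ₀ r < π)
    (hloc : ∀ ε : ℝ, 0 < ε → ∃ R : ℝ, ∀ r : ℝ, R ≤ r → ∀ θ : ℝ, |θ| ≤ θ₀ r →
      ‖f ((r : ℂ) * Complex.exp ((θ : ℂ) * Complex.I)) *
          Complex.exp (((-(θ * A r) : ℝ) : ℂ) * Complex.I + ((θ ^ 2 * B r / 2 : ℝ) : ℂ)) /
          ((fr r : ℝ) : ℂ) - 1‖ ≤ ε)
    (hdec : ∀ ε : ℝ, 0 < ε → ∃ R : ℝ, ∀ r : ℝ, R ≤ r → ∀ θ : ℝ, θ₀ r ≤ |θ| → |θ| ≤ π →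
      Real.sqrt (B r) * ‖f ((r : ℂ) * Complex.exp ((θ : ℂ) * Complex.I))‖ / fr r ≤ ε) :
    ∃ (N : ℕ) (rn : ℕ → ℝ),
      (∀ n : ℕ, N ≤ n →
        r₀ < rn n ∧ A (rn n) = n ∧ ∀ r : ℝ, r₀ < r → A r = n → r = rn n) ∧
      Tendsto rn atTop atTop ∧
      Tendsto (fun n : ℕ =>
          coef n * rn n ^ n * Real.sqrt (2 * π * B (rn n)) / fr (rn n))
        atTop (nhds 1) := by
  classical
  -- Basic analyticity facts
  have hsum : ∀ r : ℝ, Summable fun n => coef n * r ^ n := fun r => (hfrsum r).summable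
  have habs : ∀ r : ℝ, 0 ≤ r → Summable fun n => |coef n| * r ^ n :=
    summable_abs_aux coef hsum
  have hfa : AnalyticOnNhd ℂ f Set.univ := entire_aux coef f hf habs
  have hfd : Differentiable ℂ f := fun z => (hfa z trivial).differentiableAt
  have hf'a : AnalyticOnNhd ℂ (deriv f) Set.univ := hfa.deriv
  have hf'd : Differentiable ℂ (deriv f) := fun z => (hf'a z trivial).differentiableAt
  have hf''d : Differentiable ℂ (deriv (deriv f)) :=
    fun z => (hf'a.deriv z trivial).differentiableAt
  have hfr_eq : ∀ r : ℝ, f r = ((fr r : ℝ) : ℂ) := by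
    intro r
    have h1 : HasSum (fun n : ℕ => (coef n : ℂ) * (r : ℂ) ^ n) ((fr r : ℝ) : ℂ) := by
      have := (hfrsum r).mapL Complex.ofRealCLM
      convert this using 2 with n
      all_goals simp [Complex.ofRealCLM_apply]
    exact (hf r).unique h1
  have hfr_re : fr = fun r : ℝ => (f r).re := by
    funext r
    rw [hfr_eq r]
    simp
  set v : ℝ → ℝ := fun r => (deriv f r).re with hv
  set w : ℝ → ℝ := fun r => (deriv (deriv f) r).re with hw
  have hvd : ∀ r : ℝ, HasDerivAt fr (v r) r := by
    intro r
    rw [hfr_re]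
    exact ((hfd r).hasDerivAt).real_of_complex
  have hderiv_fr : deriv fr = v := funext fun r => (hvd r).deriv
  have hwd : ∀ r : ℝ, HasDerivAt v (w r) r := by
    intro r
    exact ((hf'd r).hasDerivAt).real_of_complex
  have hvc : Continuous v := Complex.continuous_re.comp (hf'd.continuous.comp Complex.continuous_ofReal)
  have hwc : Continuous w := Complex.continuous_re.comp (hf''d.continuous.comp Complex.continuous_ofReal)
  have hfrc : Continuous fr := by
    rw [hfr_re]
    exact Complex.continuous_re.comp (hfd.continuous.comp Complex.continuous_ofReal)
  have hA' : A = fun r => r * v r / fr r := by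
    funext r
    rw [hA, hderiv_fr]
  set G : ℝ → ℝ := fun r => ((1 * v r + r * w r) * fr r - r * v r * v r) / (fr r) ^ 2 with hG
  have hGc : ContinuousOn G {r : ℝ | fr r ≠ 0} := by
    apply ContinuousOn.div
    · exact (((continuous_const.mul hvc).add ((continuous_id.mul hwc))).mul hfrc).sub
        ((continuous_id.mul hvc).mul hvc) |>.continuousOn
    · exact (hfrc.pow 2).continuousOn
    · intro x hx
      exact pow_ne_zero 2 hx
  have hAd : ∀ r : ℝ, fr r ≠ 0 → HasDerivAt A (G r) r := by
    intro r hne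
    rw [hA']
    exact ((hasDerivAt_id r).mul (hwd r)).div (hvd r) hne
  have hfrne : ∀ r : ℝ, r₀ ≤ r → fr r ≠ 0 := fun r h => (hpos r h).ne'
  have hBG : ∀ r : ℝ, fr r ≠ 0 → B r = r * G r := fun r h => by rw [hB, (hAd r h).deriv]
  obtain ⟨R₀, hR₀⟩ := eventually_atTop.mp (hcap.eventually_ge_atTop 1)
  set R₁ : ℝ := max R₀ (r₀ + 1) with hR₁
  have hR₁r₀ : r₀ < R₁ := lt_of_lt_of_le (by linarith) (le_max_right _ _)
  have hR₁pos : 0 < R₁ := lt_trans hr₀ hR₁r₀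
  have hAcont : ContinuousOn A (Set.Ici r₀) := by
    rw [hA']
    exact ContinuousOn.div (continuous_id.mul hvc).continuousOn hfrc.continuousOn
      (fun x hx => hfrne x hx)
  have hmono : StrictMonoOn A (Set.Ici R₁) := by
    apply strictMonoOn_of_deriv_pos (convex_Ici R₁)
      (hAcont.mono (fun x hx => le_trans hR₁r₀.le hx))
    intro x hx
    rw [interior_Ici] at hx
    have hxR₁ : R₁ < x := hx
    have hxr₀ : r₀ ≤ x := le_trans hR₁r₀.le hxR₁.le
    have hne := hfrne x hxr₀
    rw [(hAd x hne).deriv]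
    have hBx : B x = x * G x := hBG x hne
    have hB1 : 1 ≤ B x := hR₀ x (le_trans (le_max_left _ _) hxR₁.le)
    have hxpos : 0 < x := lt_trans hR₁pos hxR₁
    nlinarith
  have hFTC : ∀ x : ℝ, R₁ ≤ x → A R₁ + (Real.log x - Real.log R₁) ≤ A x := by
    intro x hx
    have hsub : Set.uIcc R₁ x ⊆ Set.Ici r₀ := by
      rw [Set.uIcc_of_le hx]
      intro y hy
      exact le_trans hR₁r₀.le hy.1
    have hGi : IntervalIntegrable G volume R₁ x :=
      (hGc.mono (fun y hy => hfrne y (hsub hy))).intervalIntegrable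
    have hFTC' : ∫ y in R₁..x, G y = A x - A R₁ :=
      intervalIntegral.integral_eq_sub_of_hasDerivAt
        (fun y hy => hAd y (hfrne y (hsub hy))) hGi
    have hone : IntervalIntegrable (fun y : ℝ => 1 / y) volume R₁ x := by
      apply ContinuousOn.intervalIntegrable
      apply ContinuousOn.div continuousOn_const continuousOn_id
      intro y hy
      have := hsub hy
      have : (0:ℝ) < y := lt_of_lt_of_le hr₀ this
      exact this.ne'
    have hmonoint : ∫ y in R₁..x, (1:ℝ)/y ≤ ∫ y in R₁..x, G y := by
      apply intervalIntegral.integral_mono_on hx hone hGi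
      intro y hy
      have hy0 : 0 < y := lt_of_lt_of_le hR₁pos hy.1
      have hBy : 1 ≤ B y := hR₀ y (le_trans (le_max_left _ _) hy.1)
      have hGy : B y = y * G y := hBG y (hfrne y (le_trans hR₁r₀.le hy.1))
      rw [div_le_iff₀ hy0]
      nlinarith
    have hzero : (0:ℝ) ∉ Set.uIcc R₁ x := by
      rw [Set.uIcc_of_le hx]
      intro hmem
      exact absurd hmem.1 (not_le.mpr hR₁pos)
    rw [integral_one_div hzero,
      Real.log_div (ne_of_gt (lt_of_lt_of_le hR₁pos hx)) (ne_of_gt hR₁pos)] at hmonoint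
    linarith
  have hAtop : Tendsto A atTop atTop := by
    have hev : (fun x => A R₁ + (Real.log x - Real.log R₁)) ≤ᶠ[atTop] A := by
      filter_upwards [eventually_ge_atTop R₁] with x hx
      exact hFTC x hx
    refine tendsto_atTop_mono' atTop hev ?_
    apply tendsto_atTop_add_const_left
    simp only [sub_eq_add_neg]
    exact tendsto_atTop_add_const_right _ _ Real.tendsto_log_atTop
  obtain ⟨M, hM⟩ := (isCompact_Icc (a := r₀) (b := R₁)).exists_bound_of_continuousOn
    (hAcont.mono Set.Icc_subset_Ici_self)
  set N₀ : ℕ := ⌈max M (A R₁)⌉₊ + 1 with hN₀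
  have hNgt : ∀ n : ℕ, N₀ ≤ n → M < n ∧ A R₁ < n := by
    intro n hn
    have h1 : max M (A R₁) ≤ (⌈max M (A R₁)⌉₊ : ℝ) := Nat.le_ceil _
    have h2 : (⌈max M (A R₁)⌉₊ : ℝ) + 1 ≤ n := by exact_mod_cast hn
    constructor
    · linarith [le_max_left M (A R₁)]
    · linarith [le_max_right M (A R₁)]
  have hex : ∀ n : ℕ, N₀ ≤ n → ∃ c, R₁ ≤ c ∧ A c = n := by
    intro n hn
    obtain ⟨x, hx⟩ := ((hAtop.eventually_ge_atTop (n:ℝ)).and (eventually_ge_atTop R₁)).exists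
    have hIcc := intermediate_value_Icc hx.2
      ((hAcont.mono (fun y hy => le_trans hR₁r₀.le hy.1)).mono
        (Set.Icc_subset_Icc_left le_rfl))
    have hnmem : (n:ℝ) ∈ Set.Icc (A R₁) (A x) := ⟨(hNgt n hn).2.le, hx.1⟩
    obtain ⟨c, hc, hAc⟩ := hIcc hnmem
    exact ⟨c, hc.1, hAc⟩
  set rn : ℕ → ℝ := fun n => if h : ∃ c, R₁ ≤ c ∧ A c = n then h.choose else 0 with hrndef
  have hrnspec : ∀ n : ℕ, N₀ ≤ n → R₁ ≤ rn n ∧ A (rn n) = n := by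
    intro n hn
    have h := hex n hn
    simp only [hrndef, dif_pos h]
    exact h.choose_spec
  have hrngt : ∀ n : ℕ, N₀ ≤ n → R₁ < rn n := by
    intro n hn
    rcases (hrnspec n hn) with ⟨h1, h2⟩
    rcases lt_or_eq_of_le h1 with h | h
    · exact h
    · exfalso
      rw [← h] at h2
      have := (hNgt n hn).2
      linarith
  have huniq : ∀ n : ℕ, N₀ ≤ n → ∀ r : ℝ, r₀ < r → A r = n → r = rn n := by
    intro n hn r hr hAr
    have hrR₁ : R₁ ≤ r := by
      by_contra hcon
      push_neg at hcon
      have hmem : r ∈ Set.Icc r₀ R₁ := ⟨hr.le, hcon.le⟩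
      have h1 := hM r hmem
      rw [Real.norm_eq_abs] at h1
      have h2 : A r ≤ M := le_trans (le_abs_self _) h1
      have h3 := (hNgt n hn).1
      rw [hAr] at h2
      linarith
    exact hmono.injOn (Set.mem_Ici.mpr hrR₁) (Set.mem_Ici.mpr (hrnspec n hn).1)
      (by rw [hAr, (hrnspec n hn).2])
  have hrntop : Tendsto rn atTop atTop := by
    rw [tendsto_atTop]
    intro M'
    rw [eventually_atTop]
    refine ⟨max N₀ (⌈A (max M' R₁)⌉₊ + 1), fun n hn => ?_⟩
    have hn₀ : N₀ ≤ n := le_trans (le_max_left _ _) hn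
    have hAM : A (max M' R₁) < n := by
      have h1 : A (max M' R₁) ≤ (⌈A (max M' R₁)⌉₊:ℝ) := Nat.le_ceil _
      have h2 : (⌈A (max M' R₁)⌉₊:ℝ) + 1 ≤ n := by
        exact_mod_cast le_trans (le_max_right _ _) hn
      linarith
    by_contra hcon
    push_neg at hcon
    have hlt : rn n < max M' R₁ := lt_of_lt_of_le hcon (le_max_left _ _)
    have := hmono (Set.mem_Ici.mpr (hrnspec n hn₀).1) (Set.mem_Ici.mpr (le_max_right M' R₁)) hlt
    rw [(hrnspec n hn₀).2] at this
    linarith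
  have hlim : Tendsto (fun n : ℕ =>
      coef n * rn n ^ n * Real.sqrt (2 * π * B (rn n)) / fr (rn n)) atTop (nhds 1) := by
    -- blow-up of θ₀² B
    have hblow : ∀ C : ℝ, ∃ R, ∀ r : ℝ, R ≤ r → C ≤ θ₀ r ^ 2 * B r := by
      intro C
      obtain ⟨Ra, ha⟩ := hloc (1/2) (by norm_num)
      obtain ⟨Rb, hb⟩ := hdec (Real.exp (-C/2)/2) (by positivity)
      refine ⟨max (max Ra Rb) (max R₀ r₀), fun r hr => ?_⟩
      have hra : Ra ≤ r := le_trans (le_trans (le_max_left _ _) (le_max_left _ _)) hr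
      have hrb : Rb ≤ r := le_trans (le_trans (le_max_right _ _) (le_max_left _ _)) hr
      have hR₀' : R₀ ≤ r := le_trans (le_trans (le_max_left _ _) (le_max_right _ _)) hr
      have hr₀' : r₀ ≤ r := le_trans (le_trans (le_max_right _ _) (le_max_right _ _)) hr
      obtain ⟨ht0, htπ⟩ := hθ₀ r hr₀'
      have hBr : 1 ≤ B r := hR₀ r hR₀'
      have hfr := hpos r hr₀'
      have habs_t : |θ₀ r| = θ₀ r := abs_of_pos ht0
      have h1 := ha r hra (θ₀ r) (by rw [habs_t])
      have h2 := hb r hrb (θ₀ r) (by rw [habs_t]) (by rw [habs_t]; exact htπ.le)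
      set t := θ₀ r with htdef
      set X := f (↑r * Complex.exp (↑t * Complex.I)) *
        Complex.exp (((-(t * A r) : ℝ) : ℂ) * Complex.I + ((t ^ 2 * B r / 2 : ℝ) : ℂ)) /
        ((fr r : ℝ) : ℂ) with hX
      have hXnorm : ‖X‖ = ‖f (↑r * Complex.exp (↑t * Complex.I))‖ *
          Real.exp (t^2 * B r / 2) / fr r := by
        rw [hX, norm_div, norm_mul]
        congr 1
        · congr 1
          rw [Complex.norm_exp]
          congr 1
          simp [← Complex.ofReal_pow, Complex.add_re, Complex.ofReal_re]
        · rw [Complex.norm_real, Real.norm_eq_abs, abs_of_pos hfr]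
      have hXlow : (1:ℝ)/2 ≤ ‖X‖ := by
        have h3 : ‖(1:ℂ)‖ ≤ ‖X‖ + ‖X - 1‖ := by
          calc ‖(1:ℂ)‖ = ‖X - (X - 1)‖ := by rw [sub_sub_cancel]
          _ ≤ ‖X‖ + ‖X - 1‖ := norm_sub_le _ _
        rw [norm_one] at h3
        linarith
      have hsq : 0 < Real.sqrt (B r) := Real.sqrt_pos.mpr (by linarith)
      have hsq1 : 1 ≤ Real.sqrt (B r) := by
        rw [show (1:ℝ) = Real.sqrt 1 by simp]
        exact Real.sqrt_le_sqrt hBr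
      set nf := ‖f (↑r * Complex.exp (↑t * Complex.I))‖ with hnf
      have hnf0 : 0 ≤ nf := norm_nonneg _
      have hfbound : nf / fr r ≤ Real.exp (-C/2)/2 := by
        have h4 : nf / fr r = (Real.sqrt (B r) * nf / fr r) / Real.sqrt (B r) := by
          field_simp
        rw [h4]
        calc (Real.sqrt (B r) * nf / fr r) / Real.sqrt (B r)
            ≤ (Real.exp (-C/2)/2) / Real.sqrt (B r) := by
              gcongr
          _ ≤ Real.exp (-C/2)/2 := by
              apply div_le_self (by positivity) hsq1
      have hcomb : (1:ℝ)/2 ≤ (Real.exp (-C/2)/2) * Real.exp (t^2 * B r / 2) := by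
        have h5 : ‖X‖ = (nf / fr r) * Real.exp (t^2 * B r / 2) := by
          rw [hXnorm]; ring
        rw [h5] at hXlow
        calc (1:ℝ)/2 ≤ (nf / fr r) * Real.exp (t^2 * B r / 2) := hXlow
          _ ≤ (Real.exp (-C/2)/2) * Real.exp (t^2 * B r / 2) :=
              mul_le_mul_of_nonneg_right hfbound (Real.exp_nonneg _)
      have h7 : Real.exp (-C/2) * Real.exp (t^2 * B r / 2)
          = Real.exp (t^2 * B r / 2 - C/2) := by
        rw [← Real.exp_add]
        congr 1
        ring
      have h6 : 1 ≤ Real.exp (t^2 * B r / 2 - C/2) := by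
        rw [← h7]
        linarith
      rw [Real.one_le_exp_iff] at h6
      linarith
    -- Gaussian facts
    set g : ℝ → ℝ := fun u => Real.exp (-u^2/2) with hgdef
    have hgint : Integrable g := by
      have h0 := integrable_exp_neg_mul_sq (b := (1/2:ℝ)) (by norm_num)
      have h1 : (fun x : ℝ => Real.exp (-(1/2) * x^2)) = g := by
        funext x
        rw [hgdef]
        congr 1
        ring
      rwa [h1] at h0
    have hgval : ∫ u, g u = Real.sqrt (2*π) := by
      have h0 := integral_gaussian (1/2)
      have h1 : (fun x : ℝ => Real.exp (-(1/2) * x^2)) = g := by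
        funext x
        rw [hgdef]
        congr 1
        ring
      rw [h1] at h0
      rw [h0]
      congr 1
      ring
    have hKtend : Tendsto (fun c : ℝ => ∫ u in (-c)..c, g u) atTop
        (nhds (Real.sqrt (2*π))) := by
      have := intervalIntegral_tendsto_integral hgint tendsto_neg_atTop_atBot tendsto_id
      rwa [hgval] at this
    have hKle : ∀ c : ℝ, ∫ u in (-c)..c, g u ≤ Real.sqrt (2*π) := by
      intro c
      rcases le_or_gt (-c) c with h | h
      · rw [intervalIntegral.integral_of_le h, ← hgval]
        exact setIntegral_le_integral hgint (ae_of_all _ (fun u => (Real.exp_pos _).le))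
      · rw [intervalIntegral.integral_of_ge h.le]
        have h1 : 0 ≤ ∫ u in Set.Ioc c (-c), g u :=
          setIntegral_nonneg measurableSet_Ioc (fun u _ => (Real.exp_pos _).le)
        have := Real.sqrt_nonneg (2*π)
        linarith
    -- the key estimate
    have hkey : ∀ ε' : ℝ, 0 < ε' → ∀ᶠ n : ℕ in atTop,
        |2*π*(coef n * rn n ^ n) * Real.sqrt (B (rn n)) / fr (rn n) - Real.sqrt (2*π)|
          ≤ (2*π + Real.sqrt (2*π) + 1) * ε' := by
      intro ε' hε'
      obtain ⟨Rl, hl⟩ := hloc ε' hε'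
      obtain ⟨Rd, hd⟩ := hdec ε' hε'
      obtain ⟨c₀, hc₀⟩ := eventually_atTop.mp (hKtend.eventually
        (eventually_ge_nhds (show Real.sqrt (2*π) - ε' < Real.sqrt (2*π) by linarith)))
      obtain ⟨Rc, hRc⟩ := hblow ((max c₀ 0 + 1)^2)
      filter_upwards [hrntop.eventually_ge_atTop Rl, hrntop.eventually_ge_atTop Rd,
        hrntop.eventually_ge_atTop Rc, hrntop.eventually_ge_atTop R₀,
        hrntop.eventually_ge_atTop r₀, eventually_ge_atTop N₀] with n hRl' hRd' hRc' hR₀' hr₀' hnN₀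
      set r := rn n with hrdef
      set b := B r with hbdef
      set s := Real.sqrt b with hsdef
      set t := θ₀ r with htdef2
      have hfrp : 0 < fr r := hpos r hr₀'
      have hb1 : (1:ℝ) ≤ b := hR₀ r hR₀'
      have hb0 : (0:ℝ) < b := by linarith
      have hs0 : 0 < s := Real.sqrt_pos.mpr hb0
      have hs1 : 1 ≤ s := by
        rw [hsdef, show (1:ℝ) = Real.sqrt 1 by simp]
        exact Real.sqrt_le_sqrt hb1
      obtain ⟨ht0, htπ⟩ := hθ₀ r hr₀'
      have hAn : A r = n := (hrnspec n hnN₀).2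
      have hr0 : 0 < r := lt_of_lt_of_le hr₀ hr₀'
      have hts0 : 0 ≤ t * s := by positivity
      have htsc : c₀ ≤ t * s := by
        have h1 : (max c₀ 0 + 1)^2 ≤ t^2 * b := hRc r hRc'
        have h2 : t * s = Real.sqrt (t^2 * b) := by
          rw [hsdef, Real.sqrt_mul (sq_nonneg t), Real.sqrt_sq ht0.le]
        have h3 : max c₀ 0 + 1 = Real.sqrt ((max c₀ 0 + 1)^2) :=
          (Real.sqrt_sq (by positivity)).symm
        have h4 : max c₀ 0 + 1 ≤ t * s := by
          rw [h2, h3]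
          exact Real.sqrt_le_sqrt h1
        calc c₀ ≤ max c₀ 0 := le_max_left _ _
          _ ≤ t * s := by linarith
      set K := ∫ u in (-(t*s))..(t*s), g u with hKdef
      have hKl : Real.sqrt (2*π) - ε' ≤ K := hc₀ _ htsc
      have hKu : K ≤ Real.sqrt (2*π) := hKle _
      set Ig := ∫ θ in (-t)..t, Real.exp (-(θ^2*b)/2) with hIgdef
      have hIg : Ig = s⁻¹ * K := by
        have hfun : (fun θ : ℝ => Real.exp (-(θ^2*b)/2)) = fun θ => g (θ * s) := by
          funext θ
          simp only [hgdef]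
          congr 1
          rw [mul_pow, hsdef, Real.sq_sqrt hb0.le]
        rw [hIgdef, hfun, intervalIntegral.integral_comp_mul_right g hs0.ne', neg_mul,
          smul_eq_mul]
      have hIg0 : 0 ≤ Ig := by
        rw [hIgdef]
        exact intervalIntegral.integral_nonneg (by linarith) (fun u _ => (Real.exp_pos _).le)
      set φ : ℝ → ℂ := fun θ => f (↑r * Complex.exp (↑θ * Complex.I)) *
        Complex.exp (-(n:ℂ) * ↑θ * Complex.I) with hφdef
      have hcirc : Continuous (fun θ : ℝ => (↑r * Complex.exp (↑θ * Complex.I) : ℂ)) :=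
        continuous_const.mul
          (Complex.continuous_exp.comp (Complex.continuous_ofReal.mul continuous_const))
      have hgc : Continuous (fun θ : ℝ => Real.exp (-(θ^2*b)/2)) :=
        Real.continuous_exp.comp
          ((((continuous_pow 2).mul continuous_const).neg).div_const 2)
      have hφcont : Continuous φ := by
        apply Continuous.mul
        · exact hfd.continuous.comp hcirc
        · exact Complex.continuous_exp.comp
            ((continuous_const.mul Complex.continuous_ofReal).mul continuous_const)
      have hφnorm : ∀ θ : ℝ, ‖φ θ‖ = ‖f (↑r * Complex.exp (↑θ * Complex.I))‖ := by
        intro θ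
        simp only [hφdef]
        rw [norm_mul, Complex.norm_exp]
        simp
      have hJ := cauchy_coef_aux coef f hf habs r hr0 n
      have hi1 : IntervalIntegrable φ volume (-π) (-t) := hφcont.intervalIntegrable _ _
      have hi2 : IntervalIntegrable φ volume (-t) t := hφcont.intervalIntegrable _ _
      have hi3 : IntervalIntegrable φ volume t π := hφcont.intervalIntegrable _ _
      have hsum1 : (∫ θ in (-π)..(-t), φ θ) + (∫ θ in (-t)..t, φ θ) = ∫ θ in (-π)..t, φ θ :=
        intervalIntegral.integral_add_adjacent_intervals hi1 hi2
      have hsum2 : (∫ θ in (-π)..t, φ θ) + (∫ θ in t..π, φ θ) = ∫ θ in (-π)..π, φ θ :=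
        intervalIntegral.integral_add_adjacent_intervals (hi1.trans hi2) hi3
      have htail : ∀ θ : ℝ, t ≤ |θ| → |θ| ≤ π → ‖φ θ‖ ≤ ε' * fr r / s := by
        intro θ h1 h2
        rw [hφnorm θ]
        have h3 := hd r hRd' θ h1 h2
        rw [div_le_iff₀ hfrp] at h3
        rw [le_div_iff₀ hs0]
        nlinarith [norm_nonneg (f (↑r * Complex.exp (↑θ * Complex.I)))]
      have hJ1 : ‖∫ θ in (-π)..(-t), φ θ‖ ≤ (ε' * fr r / s) * (π - t) := by
        have hb1' := intervalIntegral.norm_integral_le_of_norm_le_const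
          (C := ε' * fr r / s) (f := φ) (a := -π) (b := -t) ?_
        · calc ‖∫ θ in (-π)..(-t), φ θ‖ ≤ (ε' * fr r / s) * |(-t) - (-π)| := hb1'
            _ = (ε' * fr r / s) * (π - t) := by
              rw [show (-t) - (-π) = π - t by ring, abs_of_nonneg (by linarith)]
        · intro θ hθ
          rw [Set.uIoc_of_le (by linarith : -π ≤ -t)] at hθ
          exact htail θ (by rw [abs_of_nonpos (by linarith [hθ.2, ht0])]; linarith [hθ.2])
            (by rw [abs_of_nonpos (by linarith [hθ.2, ht0])]; linarith [hθ.1])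
      have hJ3 : ‖∫ θ in t..π, φ θ‖ ≤ (ε' * fr r / s) * (π - t) := by
        have hb3' := intervalIntegral.norm_integral_le_of_norm_le_const
          (C := ε' * fr r / s) (f := φ) (a := t) (b := π) ?_
        · calc ‖∫ θ in t..π, φ θ‖ ≤ (ε' * fr r / s) * |π - t| := hb3'
            _ = (ε' * fr r / s) * (π - t) := by rw [abs_of_nonneg (by linarith)]
        · intro θ hθ
          rw [Set.uIoc_of_le htπ.le] at hθ
          exact htail θ (by rw [abs_of_nonneg (by linarith [hθ.1, ht0])]; linarith [hθ.1])
            (by rw [abs_of_nonneg (by linarith [hθ.1, ht0])]; linarith [hθ.2])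
      set ψ : ℝ → ℂ := fun θ => ((fr r * Real.exp (-(θ^2*b)/2) : ℝ) : ℂ) with hψdef
      have hψcont : Continuous ψ :=
        Complex.continuous_ofReal.comp (continuous_const.mul hgc)
      have hψint : ∫ θ in (-t)..t, ψ θ = ((fr r * Ig : ℝ) : ℂ) := by
        simp only [hψdef]
        rw [intervalIntegral.integral_ofReal]
        norm_cast
        rw [intervalIntegral.integral_const_mul, ← hIgdef]
      have hmid : ∀ θ ∈ Set.Icc (-t) t,
          ‖φ θ - ψ θ‖ ≤ ε' * (fr r * Real.exp (-(θ^2*b)/2)) := by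
        intro θ hθ
        have habsθ : |θ| ≤ t := abs_le.mpr ⟨hθ.1, hθ.2⟩
        have hX := hl r hRl' θ habsθ
        set X := f (↑r * Complex.exp (↑θ * Complex.I)) *
          Complex.exp (((-(θ * A r) : ℝ) : ℂ) * Complex.I + ((θ ^ 2 * B r / 2 : ℝ) : ℂ)) /
          ((fr r : ℝ) : ℂ) with hXdef
        have hfrne2 : ((fr r : ℝ) : ℂ) ≠ 0 := by
          simpa using hfrp.ne'
        have hexp : Complex.exp (((-(θ * A r) : ℝ) : ℂ) * Complex.I + ((θ ^ 2 * B r / 2 : ℝ) : ℂ))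
            = Complex.exp (-(n:ℂ) * ↑θ * Complex.I) * ((Real.exp (θ^2*b/2) : ℝ) : ℂ) := by
          rw [Complex.exp_add]
          congr 1
          · congr 1
            rw [hAn]
            push_cast
            ring
          · rw [← Complex.ofReal_exp]
        have hee : ψ θ * ((Real.exp (θ^2*b/2) : ℝ) : ℂ) = ((fr r : ℝ) : ℂ) := by
          simp only [hψdef]
          norm_cast
          rw [mul_assoc, ← Real.exp_add, show -(θ^2*b)/2 + θ^2*b/2 = 0 by ring,
            Real.exp_zero, mul_one]
        have hψX : ψ θ * X = φ θ := by
          calc ψ θ * X = (f (↑r * Complex.exp (↑θ * Complex.I)) *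
              Complex.exp (-(n:ℂ) * ↑θ * Complex.I)) *
              ((ψ θ * ((Real.exp (θ^2*b/2) : ℝ) : ℂ)) / ((fr r : ℝ) : ℂ)) := by
                rw [hXdef, hexp]
                ring
            _ = φ θ := by
                rw [hee, div_self hfrne2, mul_one, hφdef]
        have hid : φ θ - ψ θ = ψ θ * (X - 1) := by
          rw [mul_sub, hψX, mul_one]
        rw [hid, norm_mul]
        have hψn : ‖ψ θ‖ = fr r * Real.exp (-(θ^2*b)/2) := by
          simp only [hψdef]
          rw [Complex.norm_real, Real.norm_eq_abs, abs_of_pos (by positivity)]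
        rw [hψn, mul_comm]
        exact mul_le_mul_of_nonneg_right hX (by positivity)
      have hJ2 : ‖(∫ θ in (-t)..t, φ θ) - ((fr r * Ig : ℝ):ℂ)‖ ≤ ε' * (fr r * Ig) := by
        rw [← hψint, ← intervalIntegral.integral_sub hi2 (hψcont.intervalIntegrable _ _)]
        have hbound := intervalIntegral.norm_integral_le_integral_norm
          (μ := volume) (f := fun θ => φ θ - ψ θ) (a := -t) (b := t) (by linarith)
        refine le_trans hbound ?_
        have hmono2 : ∫ θ in (-t)..t, ‖φ θ - ψ θ‖
            ≤ ∫ θ in (-t)..t, ε' * (fr r * Real.exp (-(θ^2*b)/2)) := by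
          apply intervalIntegral.integral_mono_on (by linarith)
          · exact ((hφcont.sub hψcont).norm).intervalIntegrable _ _
          · exact Continuous.intervalIntegrable (continuous_const.mul (continuous_const.mul hgc)) _ _
          · exact hmid
        refine le_trans hmono2 ?_
        rw [show (fun θ : ℝ => ε' * (fr r * Real.exp (-(θ^2*b)/2)))
            = fun θ : ℝ => (ε' * fr r) * Real.exp (-(θ^2*b)/2) by funext θ; ring]
        rw [intervalIntegral.integral_const_mul, ← hIgdef]
        exact le_of_eq (by ring)
      have htotal : |2*π*(coef n * r^n) - fr r * Ig|
          ≤ 2*((ε' * fr r / s) * (π - t)) + ε' * (fr r * Ig) := by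
        have h1 : ((2 * π * (coef n * r ^ n) : ℝ):ℂ) - ((fr r * Ig : ℝ):ℂ)
            = (∫ θ in (-π)..(-t), φ θ) + ((∫ θ in (-t)..t, φ θ) - ((fr r * Ig:ℝ):ℂ))
              + (∫ θ in t..π, φ θ) := by
          rw [← hJ, ← hsum2, ← hsum1]
          ring
        have h2 : ‖((2 * π * (coef n * r ^ n) : ℝ):ℂ) - ((fr r * Ig : ℝ):ℂ)‖
            ≤ 2*((ε' * fr r / s) * (π - t)) + ε' * (fr r * Ig) := by
          rw [h1]
          refine le_trans (norm_add_le _ _) ?_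
          refine le_trans (add_le_add (norm_add_le _ _) le_rfl) ?_
          linarith [hJ1, hJ2, hJ3]
        rwa [← Complex.ofReal_sub, Complex.norm_real, Real.norm_eq_abs] at h2
      have hsIg : s * Ig = K := by
        rw [hIg]
        field_simp
      have hdecomp : 2*π*(coef n * r^n) * s / fr r - Real.sqrt (2*π)
          = (s / fr r) * (2*π*(coef n * r^n) - fr r * Ig) + (K - Real.sqrt (2*π)) := by
        rw [← hsIg]
        field_simp
        ring
      have hπt : t ≤ π := htπ.le
      calc |2*π*(coef n * r^n) * s / fr r - Real.sqrt (2*π)|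
          ≤ (s / fr r) * |2*π*(coef n * r^n) - fr r * Ig| + |K - Real.sqrt (2*π)| := by
            rw [hdecomp]
            refine le_trans (abs_add_le _ _) ?_
            rw [abs_mul, abs_of_nonneg (by positivity : (0:ℝ) ≤ s / fr r)]
        _ ≤ (s / fr r) * (2*((ε' * fr r / s) * (π - t)) + ε' * (fr r * Ig)) + ε' := by
            have habsK : |K - Real.sqrt (2*π)| ≤ ε' := abs_le.mpr ⟨by linarith, by linarith⟩
            have h3 := mul_le_mul_of_nonneg_left htotal
              (by positivity : (0:ℝ) ≤ s / fr r)
            linarith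
        _ = 2*ε'*(π - t) + ε' * (s * Ig) + ε' := by
            field_simp
        _ ≤ 2*ε'*π + ε' * Real.sqrt (2*π) + ε' := by
            have h5 : 2*ε'*(π-t) ≤ 2*ε'*π := by nlinarith
            have h6 : ε' * (s*Ig) ≤ ε' * Real.sqrt (2*π) := by
              rw [hsIg]
              exact mul_le_mul_of_nonneg_left hKu hε'.le
            linarith
        _ = (2*π + Real.sqrt (2*π) + 1) * ε' := by ring
    -- conclude
    have hlim2 : Tendsto (fun n : ℕ => 2*π*(coef n * rn n ^ n) * Real.sqrt (B (rn n)) / fr (rn n))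
        atTop (nhds (Real.sqrt (2*π))) := by
      rw [Metric.tendsto_atTop]
      intro ε hε
      have hden : (0:ℝ) < 2*π + Real.sqrt (2*π) + 1 := by positivity
      obtain ⟨N₃, hN₃⟩ := eventually_atTop.mp
        (hkey (ε / (2*(2*π + Real.sqrt (2*π) + 1))) (by positivity))
      refine ⟨N₃, fun n hn => ?_⟩
      rw [Real.dist_eq]
      calc |2*π*(coef n * rn n ^ n) * Real.sqrt (B (rn n)) / fr (rn n) - Real.sqrt (2*π)|
          ≤ (2*π + Real.sqrt (2*π) + 1) * (ε / (2*(2*π + Real.sqrt (2*π) + 1))) := hN₃ n hn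
        _ = ε/2 := by field_simp
        _ < ε := by linarith
    have hmul := hlim2.mul_const (Real.sqrt (2*π) / (2*π))
    have hval : Real.sqrt (2*π) * (Real.sqrt (2*π)/(2*π)) = 1 := by
      rw [mul_div_assoc']
      rw [Real.mul_self_sqrt (by positivity : (0:ℝ) ≤ 2*π)]
      field_simp
    rw [hval] at hmul
    apply hmul.congr'
    filter_upwards [eventually_ge_atTop N₀] with n hn
    have hfrp : 0 < fr (rn n) := hpos (rn n) (le_trans hR₁r₀.le (hrnspec n hn).1)
    have h2 : Real.sqrt (2*π*B (rn n)) = Real.sqrt (2*π) * Real.sqrt (B (rn n)) :=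
      Real.sqrt_mul (by positivity) _
    rw [h2]
    field_simp
  exact ⟨N₀, rn, fun n hn => ⟨lt_trans hR₁r₀ (hrngt n hn), (hrnspec n hn).2,
    huniq n hn⟩, hrntop, hlim⟩
end
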